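/- arXiv:2402.00713 — 3 statements merged into one kernel-verified Lean document; each statement's English description precedes it below -/
import Mathlib

section
/- Let (X_n) be i.i.d. under each P in a family 𝒫 and let 0 < q < 1. Suppose lim_{m→∞} sup_{P∈𝒫} E_P(|X|^q · 1{|X|^q > m}) = 0. Then for every ε > 0, lim_{m→∞} sup_{P∈𝒫} P( sup_{k ≥ m} |k^{−1/q} Σ_{i=1}^k X_i| ≥ ε ) = 0. -/
open MeasureTheory ProbabilityTheory Filter

open scoped NNReal ENNReal

set_option maxHeartbeats 1000000

lemma aux_rpow_add_le {q : ℝ} (hq0 : 0 < q) (hq1 : q ≤ 1) {x y : ℝ} (hx : 0 ≤ x) (hy : 0 ≤ y) :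
    (x + y) ^ q ≤ x ^ q + y ^ q := by
  lift x to ℝ≥0 using hx
  lift y to ℝ≥0 using hy
  have h := NNReal.rpow_add_rpow_le x y hq0 hq1
  simp only [NNReal.rpow_one, one_div_one] at h
  have h2 : (x + y) ^ q ≤ ((x ^ q + y ^ q) ^ (1 / q)) ^ q :=
    NNReal.rpow_le_rpow h hq0.le
  rw [← NNReal.rpow_mul, one_div, inv_mul_cancel₀ hq0.ne', NNReal.rpow_one] at h2
  exact_mod_cast h2

lemma aux_rpow_sum_le {q : ℝ} (hq0 : 0 < q) (hq1 : q ≤ 1) (s : Finset ℕ) (f : ℕ → ℝ)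
    (hf : ∀ i, 0 ≤ f i) : (∑ i ∈ s, f i) ^ q ≤ ∑ i ∈ s, (f i) ^ q := by
  classical
  induction s using Finset.induction with
  | empty => simp [Real.zero_rpow hq0.ne']
  | @insert a s' hx ih =>
    rw [Finset.sum_insert hx, Finset.sum_insert hx]
    calc (f a + ∑ i ∈ s', f i) ^ q ≤ (f a) ^ q + (∑ i ∈ s', f i) ^ q :=
          aux_rpow_add_le hq0 hq1 (hf a) (Finset.sum_nonneg fun i _ => hf i)
      _ ≤ (f a) ^ q + ∑ i ∈ s', (f i) ^ q := by linarith


lemma aux_measurable_sup' {α : Type*} [MeasurableSpace α] {s : Finset ℕ} (hs : s.Nonempty)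
    (g : ℕ → α → ℝ) (hg : ∀ k, Measurable (g k)) :
    Measurable (fun ω => s.sup' hs (fun k => g k ω)) := by
  classical
  induction hs using Finset.Nonempty.cons_induction with
  | singleton i => simpa using hg i
  | cons i s' hi hs' ih =>
      have : (fun ω => (Finset.cons i s' hi).sup' (Finset.cons_nonempty hi) (fun k => g k ω))
          = fun ω => max (g i ω) (s'.sup' hs' (fun k => g k ω)) := by
        funext ω; rw [Finset.sup'_cons hs']
      rw [this]
      exact (hg i).max ih

lemma aux_integrable_sup' {α : Type*} [MeasurableSpace α] {μ : Measure α} {s : Finset ℕ}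
    (hs : s.Nonempty) (g : ℕ → α → ℝ) (hg : ∀ k, Integrable (g k) μ) :
    Integrable (fun ω => s.sup' hs (fun k => g k ω)) μ := by
  classical
  induction hs using Finset.Nonempty.cons_induction with
  | singleton i => simpa using hg i
  | cons i s' hi hs' ih =>
      have : (fun ω => (Finset.cons i s' hi).sup' (Finset.cons_nonempty hi) (fun k => g k ω))
          = fun ω => max (g i ω) (s'.sup' hs' (fun k => g k ω)) := by
        funext ω; rw [Finset.sup'_cons hs']
      rw [this]
      exact (hg i).sup ih

lemma aux_map_pi {Ω : Type*} [MeasurableSpace Ω] (P : Measure Ω) [IsProbabilityMeasure P]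
    (V : ℕ → Ω → ℝ) (hV : ∀ i, Measurable (V i))
    (hind : iIndepFun V P)
    {n : ℕ} (σ : Fin n → ℕ) (hσ : Function.Injective σ) :
    P.map (fun ω (i : Fin n) => V (σ i) ω)
      = Measure.pi (fun i => P.map (V (σ i))) := by
  classical
  haveI : ∀ i : Fin n, IsProbabilityMeasure (P.map (V (σ i))) :=
    fun i => Measure.isProbabilityMeasure_map (hV _).aemeasurable
  symm
  refine Measure.pi_eq (fun s hs => ?_)
  have hF : Measurable (fun ω (i : Fin n) => V (σ i) ω) :=
    measurable_pi_lambda _ (fun i => hV _)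
  rw [Measure.map_apply hF (MeasurableSet.univ_pi hs)]
  have hpre : (fun ω (i : Fin n) => V (σ i) ω) ⁻¹' (Set.pi Set.univ s)
      = ⋂ i : Fin n, V (σ i) ⁻¹' s i := by
    ext ω; simp [Set.mem_pi]
  rw [hpre]
  -- rewrite as an intersection over the image finset
  set t : ℕ → Set ℝ := fun j => if h : ∃ i, σ i = j then s h.choose else Set.univ with ht
  have htσ : ∀ i : Fin n, t (σ i) = s i := by
    intro i
    have h : ∃ i' : Fin n, σ i' = σ i := ⟨i, rfl⟩
    simp only [ht, dif_pos h]
    exact congrArg s (hσ h.choose_spec)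
  have htmeas : ∀ j, MeasurableSet (t j) := by
    intro j
    by_cases h : ∃ i, σ i = j
    · simp only [ht, dif_pos h]; exact hs _
    · simp only [ht, dif_neg h]; exact MeasurableSet.univ
  have hinter : (⋂ i : Fin n, V (σ i) ⁻¹' s i)
      = ⋂ j ∈ Finset.image σ Finset.univ, V j ⁻¹' t j := by
    ext ω
    simp only [Set.mem_iInter, Finset.mem_image, Finset.mem_univ, true_and, Set.mem_preimage]
    constructor
    · rintro h j ⟨i, rfl⟩
      rw [htσ i]; exact h i
    · intro h i
      have := h (σ i) ⟨i, rfl⟩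
      rwa [htσ i] at this
  rw [hinter]
  rw [hind.measure_inter_preimage_eq_mul (Finset.image σ Finset.univ)
    (sets := t) (fun j _ => htmeas j)]
  rw [Finset.prod_image (fun i _ j _ hij => hσ hij)]
  refine Finset.prod_congr rfl (fun i _ => ?_)
  rw [htσ i, Measure.map_apply (hV _) (hs i)]


lemma aux_hopf {Ω : Type*} [MeasurableSpace Ω] (P : Measure Ω) [IsProbabilityMeasure P]
    (V : ℕ → Ω → ℝ) (hV : ∀ i, Measurable (V i))
    (hind : iIndepFun V P)
    (hident : ∀ i j, IdentDistrib (V i) (V j) P P)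
    (hnn : ∀ i ω, 0 ≤ V i ω) (hint : Integrable (V 1) P)
    {c : ℝ} (hc : 0 < c) :
    P {ω | ∃ k, 1 ≤ k ∧ c * k ≤ ∑ i ∈ Finset.Icc 1 k, V i ω}
      ≤ ENNReal.ofReal ((∫ ω, V 1 ω ∂P) / c) := by
  classical
  set u := ∫ ω, V 1 ω ∂P with hu
  have hintall : ∀ i, Integrable (V i) P := fun i => (hident i 1).integrable_iff.mpr hint
  set Dn : ℕ → Set Ω :=
    fun n => {ω | ∃ k, 1 ≤ k ∧ k ≤ n ∧ c * k ≤ ∑ i ∈ Finset.Icc 1 k, V i ω} with hDn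
  have hmono : Monotone Dn := fun n n' h ω => by
    rintro ⟨k, h1, h2, h3⟩; exact ⟨k, h1, h2.trans h, h3⟩
  have hcover : {ω | ∃ k, 1 ≤ k ∧ c * k ≤ ∑ i ∈ Finset.Icc 1 k, V i ω} ⊆ ⋃ n, Dn n := by
    rintro ω ⟨k, h1, h3⟩
    exact Set.mem_iUnion.mpr ⟨k, k, h1, le_refl k, h3⟩
  refine (measure_mono hcover).trans ?_
  rw [hmono.directed_le.measure_iUnion]
  refine iSup_le (fun n => ?_)
  rcases Nat.eq_zero_or_pos n with rfl | hn
  · have : Dn 0 = ∅ := by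
      rw [Set.eq_empty_iff_forall_notMem]
      rintro ω ⟨k, h1, h2, _⟩; omega
    simp [this]
  -- main case : 1 ≤ n
  have ne1 : (Finset.Icc 1 n).Nonempty := ⟨1, Finset.mem_Icc.mpr ⟨le_refl 1, hn⟩⟩
  set f : ℕ → Ω → ℝ := fun i ω => V i ω - c with hf
  set Sp : ℕ → Ω → ℝ := fun k ω => ∑ i ∈ Finset.range k, f (1 + i) ω with hSp
  set Sp' : ℕ → Ω → ℝ := fun k ω => ∑ i ∈ Finset.range k, f (2 + i) ω with hSp'
  set T : Ω → ℝ := fun ω => (Finset.Icc 1 n).sup' ne1 (fun k => Sp k ω) with hT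
  set T' : Ω → ℝ := fun ω => (Finset.Icc 1 n).sup' ne1 (fun k => Sp' k ω) with hT'
  set N : Ω → ℝ := fun ω => max (T ω) 0 with hN
  set N' : Ω → ℝ := fun ω => max (T' ω) 0 with hN'
  set E : Set Ω := {ω | 0 ≤ T ω} with hE
  have hSpmeas : ∀ k, Measurable (Sp k) :=
    fun k => Finset.measurable_sum _ (fun i _ => (hV (1 + i)).sub measurable_const)
  have hSpmeas' : ∀ k, Measurable (Sp' k) :=
    fun k => Finset.measurable_sum _ (fun i _ => (hV (2 + i)).sub measurable_const)
  have hTmeas : Measurable T := aux_measurable_sup' ne1 Sp hSpmeas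
  have hEmeas : MeasurableSet E := measurableSet_le measurable_const hTmeas
  have hSpint : ∀ k, Integrable (Sp k) P :=
    fun k => integrable_finset_sum _ (fun i _ => (hintall (1 + i)).sub (integrable_const c))
  have hSpint' : ∀ k, Integrable (Sp' k) P :=
    fun k => integrable_finset_sum _ (fun i _ => (hintall (2 + i)).sub (integrable_const c))
  have hTint : Integrable T P := aux_integrable_sup' ne1 Sp hSpint
  have hTint' : Integrable T' P := aux_integrable_sup' ne1 Sp' hSpint'
  have hNint : Integrable N P := hTint.pos_part
  have hNint' : Integrable N' P := hTint'.pos_part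
  -- rewriting Icc-sums as range-sums
  have hIccRange : ∀ (g : ℕ → ℝ) (k : ℕ),
      ∑ i ∈ Finset.Icc 1 k, g i = ∑ i ∈ Finset.range k, g (1 + i) := by
    intro g k
    rw [← Finset.Ico_add_one_right_eq_Icc, Finset.sum_Ico_eq_sum_range]
    simp
  -- inclusion of the n-th event in E
  have hDE : Dn n ⊆ E := by
    rintro ω ⟨k, hk1, hkn, hck⟩
    have hSpk : Sp k ω = (∑ i ∈ Finset.Icc 1 k, V i ω) - c * k := by
      rw [hIccRange (fun i => V i ω) k]
      simp only [hSp, hf, Finset.sum_sub_distrib, Finset.sum_const, Finset.card_range,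
        nsmul_eq_mul]
      ring
    have h0 : (0 : ℝ) ≤ Sp k ω := by rw [hSpk]; linarith
    exact le_trans h0 (Finset.le_sup' (fun k => Sp k ω) (Finset.mem_Icc.mpr ⟨hk1, hkn⟩))
  -- nonnegativity of N'
  have hN'nn : ∀ ω, 0 ≤ N' ω := fun ω => le_max_right _ _
  -- key pointwise inequality on E
  have hkey : ∀ ω ∈ E, N ω - N' ω ≤ f 1 ω := by
    intro ω hω
    have hNT : N ω = T ω := max_eq_left hω
    have hTf : T ω ≤ f 1 ω + N' ω := by
      refine Finset.sup'_le _ _ (fun k hk => ?_)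
      obtain ⟨hk1, hkn⟩ := Finset.mem_Icc.mp hk
      obtain ⟨j, rfl⟩ : ∃ j, k = j + 1 := ⟨k - 1, by omega⟩
      have hsplit : Sp (j + 1) ω = Sp' j ω + f 1 ω := by
        simp only [hSp, hSp']
        rw [Finset.sum_range_succ']
        congr 1
        refine Finset.sum_congr rfl (fun i _ => ?_)
        rw [show 1 + (i + 1) = 2 + i from by omega]
      have hSp'N : Sp' j ω ≤ N' ω := by
        rcases Nat.eq_zero_or_pos j with rfl | hj
        · simp only [hSp', Finset.range_zero, Finset.sum_empty]
          exact hN'nn ω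
        · refine le_trans (Finset.le_sup' (fun k => Sp' k ω)
            (Finset.mem_Icc.mpr ⟨hj, by omega⟩)) (le_max_left _ _)
      rw [hsplit]; linarith
    rw [hNT]; linarith
  -- identical distribution of N and N'
  have hΦaux : ∀ (m₀ : ℕ) (k : ℕ), k ∈ Finset.Icc 1 n → ∀ ω : Ω,
      (∑ i : Fin n, if (i : ℕ) < k then V (m₀ + (i : ℕ)) ω - c else 0)
        = ∑ i ∈ Finset.range k, (V (m₀ + i) ω - c) := by
    intro m₀ k hk ω
    obtain ⟨_, hkn⟩ := Finset.mem_Icc.mp hk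
    rw [Fin.sum_univ_eq_sum_range (fun i => if i < k then V (m₀ + i) ω - c else 0) n]
    rw [← Finset.sum_filter]
    congr 1
    ext a
    simp only [Finset.mem_filter, Finset.mem_range]
    omega
  set Φ : (Fin n → ℝ) → ℝ := fun v =>
    max ((Finset.Icc 1 n).sup' ne1 (fun k => ∑ i : Fin n, if (i : ℕ) < k then v i - c else 0)) 0
    with hΦ
  have hΦmeas : Measurable Φ := by
    refine Measurable.max ?_ measurable_const
    refine aux_measurable_sup' ne1 _ (fun k => ?_)
    refine Finset.measurable_sum _ (fun i _ => ?_)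
    by_cases h : (i : ℕ) < k
    · simp only [if_pos h]; exact (measurable_pi_apply i).sub measurable_const
    · simp only [if_neg h]; exact measurable_const
  have hNcomp : N = Φ ∘ (fun ω (i : Fin n) => V (1 + (i : ℕ)) ω) := by
    funext ω
    simp only [hN, hΦ, Function.comp_apply]
    congr 1
    refine Finset.sup'_congr ne1 rfl (fun k hk => ?_)
    rw [hΦaux 1 k hk ω]
  have hNcomp' : N' = Φ ∘ (fun ω (i : Fin n) => V (2 + (i : ℕ)) ω) := by
    funext ω
    simp only [hN', hΦ, Function.comp_apply]
    congr 1
    refine Finset.sup'_congr ne1 rfl (fun k hk => ?_)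
    rw [hΦaux 2 k hk ω]
  have hID : IdentDistrib (fun ω (i : Fin n) => V (1 + (i : ℕ)) ω)
      (fun ω (i : Fin n) => V (2 + (i : ℕ)) ω) P P := by
    refine ⟨(measurable_pi_lambda _ (fun i => hV _)).aemeasurable,
      (measurable_pi_lambda _ (fun i => hV _)).aemeasurable, ?_⟩
    have hinj1 : Function.Injective (fun i : Fin n => 1 + (i : ℕ)) := fun i j h =>
      Fin.ext (by have h' : 1 + (i : ℕ) = 1 + (j : ℕ) := h; omega)
    have hinj2 : Function.Injective (fun i : Fin n => 2 + (i : ℕ)) := fun i j h =>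
      Fin.ext (by have h' : 2 + (i : ℕ) = 2 + (j : ℕ) := h; omega)
    rw [aux_map_pi P V hV hind (fun i : Fin n => 1 + (i : ℕ)) hinj1,
      aux_map_pi P V hV hind (fun i : Fin n => 2 + (i : ℕ)) hinj2]
    congr 1
    funext i
    exact (hident (1 + (i : ℕ)) (2 + (i : ℕ))).map_eq
  have hNN' : IdentDistrib N N' P P := by
    rw [hNcomp, hNcomp']
    exact hID.comp hΦmeas
  have hEN : ∫ ω, N ω ∂P = ∫ ω, N' ω ∂P := hNN'.integral_eq
  -- integral comparison
  have hsub : Integrable (fun ω => N ω - N' ω) P := hNint.sub hNint'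
  have h3 : ∫ ω, (N ω - N' ω) ∂P = 0 := by
    rw [integral_sub hNint hNint', hEN, sub_self]
  have h2 : (0:ℝ) ≤ ∫ ω in E, (N ω - N' ω) ∂P := by
    have hcompl : ∫ ω in Eᶜ, (N ω - N' ω) ∂P ≤ 0 := by
      refine setIntegral_nonpos hEmeas.compl (fun ω hω => ?_)
      have hTneg : T ω < 0 := lt_of_not_ge (by simpa [hE] using hω)
      have h0 : N ω = 0 := max_eq_right hTneg.le
      rw [h0]
      linarith [hN'nn ω]
    have hadd := integral_add_compl hEmeas hsub
    linarith [hadd, h3, hcompl]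
  have h1 : ∫ ω in E, (N ω - N' ω) ∂P ≤ ∫ ω in E, f 1 ω ∂P :=
    setIntegral_mono_on hsub.integrableOn ((hintall 1).sub (integrable_const c)).integrableOn
      hEmeas hkey
  have hf1 : ∫ ω in E, f 1 ω ∂P = (∫ ω in E, V 1 ω ∂P) - c * (P E).toReal := by
    simp only [hf]
    rw [integral_sub hint.integrableOn (integrableOn_const (measure_ne_top P E))]
    rw [setIntegral_const]
    rw [smul_eq_mul, mul_comm]
    rfl
  have hVE : ∫ ω in E, V 1 ω ∂P ≤ u :=
    setIntegral_le_integral hint (ae_of_all _ (fun ω => hnn 1 ω))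
  have hfinal : c * (P E).toReal ≤ u := by
    have := le_trans h2 h1
    rw [hf1] at this
    linarith
  have htoE : (P E).toReal ≤ u / c := (le_div_iff₀ hc).mpr (by linarith [hfinal])
  calc P (Dn n) ≤ P E := measure_mono hDE
    _ = ENNReal.ofReal ((P E).toReal) := (ENNReal.ofReal_toReal (measure_ne_top P E)).symm
    _ ≤ ENNReal.ofReal (u / c) := ENNReal.ofReal_le_ofReal htoE



/-- Ps-uniform Marcinkiewicz–Zygmund strong law (sufficiency, `0 < q < 1`): if the uncentered
q-th moment of i.i.d. variables is Ps-uniformly integrable, then `k^{-1/q} Σ_{i=1}^k X_i`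
vanishes Ps-uniformly almost surely. -/
theorem stmt14 {Ω : Type*} [MeasurableSpace Ω] (Ps : Set (Measure Ω))
    (hPs : ∀ P ∈ Ps, IsProbabilityMeasure P)
    (X : ℕ → Ω → ℝ) (hmeas : ∀ n, Measurable (X n))
    (hindep : ∀ P ∈ Ps, iIndepFun X P)
    (hiid : ∀ P ∈ Ps, ∀ n, IdentDistrib (X n) (X 0) P P)
    (q : ℝ) (hq0 : 0 < q) (hq1 : q < 1)
    (hmom : ∀ P ∈ Ps, Integrable (fun ω => |X 0 ω| ^ q) P)
    (hUI : ∀ ε : ℝ, 0 < ε → ∃ M : ℕ, ∀ m ≥ M, ∀ P ∈ Ps,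
      ∫ ω in {ω | (m : ℝ) < |X 0 ω| ^ q}, |X 0 ω| ^ q ∂P < ε) :
    ∀ ε : ℝ, 0 < ε → ∀ δ : ℝ, 0 < δ → ∃ M : ℕ, ∀ m ≥ M, ∀ P ∈ Ps,
      P {ω | ∃ k ≥ m, ε ≤
        |((k : ℝ) ^ (1 / q))⁻¹ * ∑ i ∈ Finset.Icc 1 k, X i ω|} < ENNReal.ofReal δ := by
  intro ε hε δ hδ
  have hε2 : (0:ℝ) < ε / 2 := by linarith
  set a : ℝ := (ε / 2) ^ q with ha
  have ha0 : 0 < a := Real.rpow_pos_of_pos hε2 q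
  -- choose the truncation level L via uniform integrability
  obtain ⟨M₀, hM₀⟩ := hUI (a * δ / 4) (by positivity)
  set L : ℕ := max M₀ 1 with hLdef
  have hL1 : (1:ℝ) ≤ (L:ℝ) := by
    have : 1 ≤ L := Nat.le_max_right M₀ 1
    exact_mod_cast this
  have hL0 : (0:ℝ) < (L:ℝ) := by linarith
  have hLM₀ : M₀ ≤ L := Nat.le_max_left _ _
  set R : ℝ := (L:ℝ) ^ (1/q) with hRdef
  have hRpos : 0 < R := Real.rpow_pos_of_pos hL0 _
  -- choose M₁ so that k^{1-1/q} * R < ε/2 for k ≥ M₁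
  have htend : Tendsto (fun k : ℕ => (k:ℝ) ^ (1 - 1/q)) atTop (nhds 0) := by
    have hy : (0:ℝ) < 1/q - 1 := by
      rw [sub_pos, lt_div_iff₀ hq0]; linarith
    have h := (tendsto_rpow_neg_atTop hy).comp tendsto_natCast_atTop_atTop (α := ℕ)
    simpa [Function.comp_def, neg_sub] using h
  have hev : ∀ᶠ k : ℕ in atTop, (k:ℝ) ^ (1 - 1/q) < (ε/2) / R :=
    htend.eventually (gt_mem_nhds (by positivity))
  obtain ⟨M₁, hM₁⟩ := eventually_atTop.mp hev
  refine ⟨max M₁ 1, fun m hm P hP => ?_⟩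
  haveI := hPs P hP
  -- the truncated q-th powers
  set g : ℝ → ℝ := fun x => if (L:ℝ) < |x| ^ q then |x| ^ q else 0 with hgdef
  have habs : Measurable fun x : ℝ => |x| ^ q := measurable_abs.pow measurable_const
  have hgmeas : Measurable g :=
    Measurable.ite (measurableSet_lt measurable_const habs) habs measurable_const
  set V : ℕ → Ω → ℝ := fun i ω => g (X i ω) with hVdef
  have hVmeas : ∀ i, Measurable (V i) := fun i => hgmeas.comp (hmeas i)
  have hVind : iIndepFun V P :=
    (hindep P hP).comp (fun _ => g) (fun _ => hgmeas)
  have hVident : ∀ i j, IdentDistrib (V i) (V j) P P := fun i j =>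
    ((hiid P hP i).comp hgmeas).trans ((hiid P hP j).comp hgmeas).symm
  have hVnn : ∀ i ω, 0 ≤ V i ω := by
    intro i ω
    simp only [hVdef, hgdef]
    split_ifs
    · exact Real.rpow_nonneg (abs_nonneg _) q
    · exact le_refl 0
  have hV0int : Integrable (fun ω => g (X 0 ω)) P := by
    refine (hmom P hP).mono (hgmeas.comp (hmeas 0)).aestronglyMeasurable
      (ae_of_all _ fun ω => ?_)
    rw [Real.norm_eq_abs, Real.norm_eq_abs]
    have h1 : (0:ℝ) ≤ |X 0 ω| ^ q := Real.rpow_nonneg (abs_nonneg _) q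
    rw [abs_of_nonneg h1]
    simp only [hgdef]
    split_ifs
    · rw [abs_of_nonneg h1]
    · simp [h1]
  have hVint : Integrable (V 1) P :=
    ((hiid P hP 1).comp hgmeas).integrable_iff.mpr hV0int
  -- bound on the mean of the truncated variables
  have hu : ∫ ω, V 1 ω ∂P < a * δ / 4 := by
    have h1 : ∫ ω, V 1 ω ∂P = ∫ ω, g (X 0 ω) ∂P :=
      ((hiid P hP 1).comp hgmeas).integral_eq
    have h2 : (fun ω => g (X 0 ω))
        = Set.indicator {ω | (L:ℝ) < |X 0 ω| ^ q} (fun ω => |X 0 ω| ^ q) := by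
      funext ω
      rw [Set.indicator_apply]
      simp only [hgdef, Set.mem_setOf_eq]
    have hsetmeas : MeasurableSet {ω | (L:ℝ) < |X 0 ω| ^ q} :=
      measurableSet_lt measurable_const (habs.comp (hmeas 0))
    rw [h1, h2, integral_indicator hsetmeas]
    exact hM₀ L hLM₀ P hP
  -- Hopf maximal bound
  have hhopf := aux_hopf P V hVmeas hVind hVident hVnn hVint (c := a/2) (by positivity)
  -- inclusion of events
  have hm1 : 1 ≤ m := le_trans (le_max_right M₁ 1) hm
  have hincl : {ω | ∃ k ≥ m, ε ≤ |((k : ℝ) ^ (1 / q))⁻¹ * ∑ i ∈ Finset.Icc 1 k, X i ω|}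
      ⊆ {ω | ∃ k, 1 ≤ k ∧ a / 2 * k ≤ ∑ i ∈ Finset.Icc 1 k, V i ω} := by
    rintro ω ⟨k, hkm, hεk⟩
    have hk1 : 1 ≤ k := hm1.trans hkm
    have hkR : (1:ℝ) ≤ (k:ℝ) := by exact_mod_cast hk1
    have hk0 : (0:ℝ) < (k:ℝ) := by linarith
    have hkpos : (0:ℝ) < (k:ℝ) ^ (1/q) := Real.rpow_pos_of_pos hk0 _
    set S := ∑ i ∈ Finset.Icc 1 k, X i ω with hSdef
    have hS : ε * (k:ℝ) ^ (1/q) ≤ |S| := by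
      have h1 : |((k : ℝ) ^ (1 / q))⁻¹ * S| = ((k : ℝ) ^ (1 / q))⁻¹ * |S| := by
        rw [abs_mul, abs_of_pos (inv_pos.mpr hkpos)]
      rw [h1, inv_mul_eq_div] at hεk
      exact (le_div_iff₀ hkpos).mp hεk
    -- split
    set B : ℕ → ℝ := fun i => if (L:ℝ) < |X i ω| ^ q then |X i ω| else 0 with hBdef
    have hBnn : ∀ i, 0 ≤ B i := by
      intro i; simp only [hBdef]; split_ifs
      · exact abs_nonneg _
      · exact le_refl 0
    have hsplit : ∀ i, |X i ω| ≤ B i + R := by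
      intro i
      simp only [hBdef]
      split_ifs with h
      · linarith [hRpos.le]
      · push_neg at h
        have h2 : |X i ω| ≤ R := by
          have h3 : (|X i ω| ^ q) ^ (1/q) ≤ (L:ℝ) ^ (1/q) :=
            Real.rpow_le_rpow (Real.rpow_nonneg (abs_nonneg _) q) h (by positivity)
          rwa [← Real.rpow_mul (abs_nonneg _), mul_one_div_cancel hq0.ne',
            Real.rpow_one] at h3
        linarith
    have htri : |S| ≤ (∑ i ∈ Finset.Icc 1 k, B i) + k * R := by
      calc |S| ≤ ∑ i ∈ Finset.Icc 1 k, |X i ω| := Finset.abs_sum_le_sum_abs _ _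
        _ ≤ ∑ i ∈ Finset.Icc 1 k, (B i + R) := Finset.sum_le_sum (fun i _ => hsplit i)
        _ = (∑ i ∈ Finset.Icc 1 k, B i) + k * R := by
            rw [Finset.sum_add_distrib, Finset.sum_const, Nat.card_Icc]
            simp [nsmul_eq_mul]
    have hkRbound : (k:ℝ) * R < (ε/2) * (k:ℝ) ^ (1/q) := by
      have h1 : (k:ℝ) ^ (1 - 1/q) < (ε/2) / R := hM₁ k (le_trans (le_max_left M₁ 1) hm |>.trans hkm)
      have h2 : (k:ℝ) ^ (1 - 1/q) * R < ε/2 := by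
        rw [← lt_div_iff₀ hRpos]; exact h1
      have h3 : (k:ℝ) = (k:ℝ) ^ (1/q) * (k:ℝ) ^ (1 - 1/q) := by
        rw [← Real.rpow_add hk0]
        simp
      have h5 := mul_lt_mul_of_pos_left h2 hkpos
      nlinarith [h5, h3, hRpos.le]
    have hBsum : (ε/2) * (k:ℝ) ^ (1/q) ≤ ∑ i ∈ Finset.Icc 1 k, B i := by linarith
    have hak : a * k ≤ ∑ i ∈ Finset.Icc 1 k, V i ω := by
      have h1 : ((ε/2) * (k:ℝ) ^ (1/q)) ^ q ≤ (∑ i ∈ Finset.Icc 1 k, B i) ^ q :=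
        Real.rpow_le_rpow (by positivity) hBsum hq0.le
      have h2 : ((ε/2) * (k:ℝ) ^ (1/q)) ^ q = a * k := by
        rw [Real.mul_rpow hε2.le hkpos.le, ← Real.rpow_mul hk0.le,
          one_div_mul_cancel hq0.ne', Real.rpow_one]
      have h3 : (∑ i ∈ Finset.Icc 1 k, B i) ^ q ≤ ∑ i ∈ Finset.Icc 1 k, (B i) ^ q :=
        aux_rpow_sum_le hq0 hq1.le _ _ hBnn
      have h4 : ∀ i, (B i) ^ q = V i ω := by
        intro i
        simp only [hBdef, hVdef, hgdef]
        split_ifs with h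
        · rfl
        · exact Real.zero_rpow hq0.ne'
      have h5 : ∑ i ∈ Finset.Icc 1 k, (B i) ^ q = ∑ i ∈ Finset.Icc 1 k, V i ω :=
        Finset.sum_congr rfl (fun i _ => h4 i)
      rw [h2] at h1
      rw [h5] at h3
      linarith
    exact ⟨k, hk1, by nlinarith [hak, ha0, hk0]⟩
  -- conclusion
  calc P {ω | ∃ k ≥ m, ε ≤ |((k : ℝ) ^ (1 / q))⁻¹ * ∑ i ∈ Finset.Icc 1 k, X i ω|}
      ≤ P {ω | ∃ k, 1 ≤ k ∧ a / 2 * k ≤ ∑ i ∈ Finset.Icc 1 k, V i ω} := measure_mono hincl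
    _ ≤ ENNReal.ofReal ((∫ ω, V 1 ω ∂P) / (a/2)) := hhopf
    _ < ENNReal.ofReal δ := by
        rw [ENNReal.ofReal_lt_ofReal_iff hδ]
        rw [div_lt_iff₀ (by positivity : (0:ℝ) < a/2)]
        nlinarith [hu, ha0, hδ]
end

section
/- Let (X_n) be i.i.d. under each P in a family 𝒫, let 0 < q < 2, and set μ(P;q) = E_P X if 1 ≤ q < 2 and μ(P;q) = 0 if 0 < q < 1. If lim_{m→∞} sup_{P∈𝒫} E_P(|X − μ(P;q)|^q · 1{|X − μ(P;q)|^q > m}) > 0, then lim_{m→∞} sup_{P∈𝒫} P( sup_{k ≥ m} |k^{−1/q} Σ_{i=1}^k (X_i − μ(P;q))| ≥ 1/2 ) > 0; in particular the 𝒫-uniform strong law at rate n^{1/q−1} fails. -/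
open MeasureTheory ProbabilityTheory Filter
open scoped ENNReal NNReal

private lemma aux_pt (M : ℕ) (y : ℝ) :
    (if ((8 * M : ℕ) : ℝ) < y then ENNReal.ofReal y else 0) ≤
      ∑' k : ℕ, (if 4 * ((M + k : ℕ) : ℝ) < y then (8 : ℝ≥0∞) else 0) := by
  by_cases h : ((8 * M : ℕ) : ℝ) < y
  · rw [if_pos h]
    have h' : ((8 * M : ℕ) : ℝ) < y := h
    push_cast at h'
    have hy : (0 : ℝ) < y := lt_of_le_of_lt (by positivity) h'
    set n := Nat.ceil (y / 8) with hn
    have h1 : y ≤ 8 * n := by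
      have := Nat.le_ceil (y / 8); rw [← hn] at this; linarith
    calc ENNReal.ofReal y ≤ ENNReal.ofReal (8 * n) := ENNReal.ofReal_le_ofReal h1
      _ = ∑ _k ∈ Finset.range n, (8 : ℝ≥0∞) := by
          rw [Finset.sum_const, Finset.card_range,
            ENNReal.ofReal_mul (by norm_num : (0:ℝ) ≤ 8), ENNReal.ofReal_natCast,
            ENNReal.ofReal_ofNat, nsmul_eq_mul, mul_comm]
      _ = ∑ k ∈ Finset.range n, (if 4 * ((M + k : ℕ) : ℝ) < y then (8 : ℝ≥0∞) else 0) := by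
          refine Finset.sum_congr rfl fun k hk => ?_
          rw [if_pos]
          have hk1 : k + 1 ≤ n := Finset.mem_range.mp hk
          have hk2 : (k : ℝ) + 1 ≤ (n : ℝ) := by exact_mod_cast hk1
          have h3 : (n : ℝ) < y / 8 + 1 := by
            rw [hn]; exact Nat.ceil_lt_add_one (by positivity)
          push_cast
          linarith
      _ ≤ ∑' k : ℕ, (if 4 * ((M + k : ℕ) : ℝ) < y then (8 : ℝ≥0∞) else 0) :=
          ENNReal.sum_le_tsum _
  · rw [if_neg h]; exact zero_le

/-- Necessity of Ps-uniform integrability for the Ps-uniform Marcinkiewicz–Zygmund strong law: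
with `μ(P;q) = E_P X` for `1 ≤ q < 2` and `μ(P;q) = 0` for `0 < q < 1`, if the q-th
moment is not Ps-uniformly integrable, then the strong law at rate `n^{1/q−1}` fails (with
constant `1/2`). -/
theorem stmt15 {Ω : Type*} [MeasurableSpace Ω] (Ps : Set (Measure Ω))
    (hPs : ∀ P ∈ Ps, IsProbabilityMeasure P)
    (X : ℕ → Ω → ℝ) (hmeas : ∀ n, Measurable (X n))
    (hindep : ∀ P ∈ Ps, iIndepFun X P)
    (hiid : ∀ P ∈ Ps, ∀ n, IdentDistrib (X n) (X 0) P P)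
    (q : ℝ) (hq0 : 0 < q) (hq2 : q < 2)
    (hint : 1 ≤ q → ∀ P ∈ Ps, Integrable (X 0) P)
    (hnUI : ∃ ε : ℝ, 0 < ε ∧ ∀ m : ℕ, ∃ P ∈ Ps,
      ENNReal.ofReal ε ≤
        ∫⁻ ω in {ω | (m : ℝ) <
            |X 0 ω - (if 1 ≤ q then ∫ x, X 0 x ∂P else 0)| ^ q},
          ENNReal.ofReal (|X 0 ω - (if 1 ≤ q then ∫ x, X 0 x ∂P else 0)| ^ q) ∂P) :
    ∃ ε : ℝ, 0 < ε ∧ ∀ m : ℕ, ∃ P ∈ Ps,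
      ENNReal.ofReal ε ≤
        P {ω | ∃ k ≥ m, (1 : ℝ) / 2 ≤
          |((k : ℝ) ^ (1 / q))⁻¹ *
            ∑ i ∈ Finset.Icc 1 k, (X i ω - (if 1 ≤ q then ∫ x, X 0 x ∂P else 0))|} := by
  classical
  obtain ⟨ε, hε, hUI⟩ := hnUI
  refine ⟨1 - Real.exp (-(ε / 16)), by
    have : Real.exp (-(ε / 16)) < 1 := Real.exp_lt_one_iff.mpr (by linarith)
    linarith, ?_⟩
  intro m
  set M := m + 2 with hM
  obtain ⟨P, hP, htail⟩ := hUI (8 * M)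
  haveI : IsProbabilityMeasure P := hPs P hP
  refine ⟨P, hP, ?_⟩
  set μP := (if 1 ≤ q then ∫ x, X 0 x ∂P else 0) with hμP
  -- measurability facts
  have hYmeas : Measurable (fun ω => |X 0 ω - μP| ^ q) :=
    (Real.continuous_rpow_const hq0.le).measurable.comp (((hmeas 0).sub measurable_const).abs)
  have hsetY : ∀ c : ℝ, MeasurableSet {ω | c < |X 0 ω - μP| ^ q} :=
    fun c => measurableSet_lt measurable_const hYmeas
  set sf : ℕ → Set ℝ := fun j => {x : ℝ | 2 * (j : ℝ) ^ (1 / q) < |x - μP|} with hsf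
  have hsf_meas : ∀ j, MeasurableSet (sf j) :=
    fun j => measurableSet_lt measurable_const ((measurable_id.sub measurable_const).abs)
  set A : ℕ → Set Ω := fun j => X j ⁻¹' sf j with hA
  have hA_meas : ∀ j, MeasurableSet (A j) := fun j => (hsf_meas j).preimage (hmeas j)
  -- Step A: tail moment bounded by sum of tail probabilities
  have hsumA : ENNReal.ofReal ε ≤
      ∑' k : ℕ, 8 * P {ω | 4 * ((M + k : ℕ) : ℝ) < |X 0 ω - μP| ^ q} := by
    calc ENNReal.ofReal ε
        ≤ ∫⁻ ω in {ω | ((8 * M : ℕ) : ℝ) < |X 0 ω - μP| ^ q},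
            ENNReal.ofReal (|X 0 ω - μP| ^ q) ∂P := htail
      _ = ∫⁻ ω, Set.indicator {ω | ((8 * M : ℕ) : ℝ) < |X 0 ω - μP| ^ q}
            (fun ω => ENNReal.ofReal (|X 0 ω - μP| ^ q)) ω ∂P :=
          (lintegral_indicator (hsetY _) _).symm
      _ ≤ ∫⁻ ω, ∑' k : ℕ, Set.indicator {ω | 4 * ((M + k : ℕ) : ℝ) < |X 0 ω - μP| ^ q}
            (fun _ => (8 : ℝ≥0∞)) ω ∂P := by
          refine lintegral_mono fun ω => ?_
          simp only [Set.indicator_apply, Set.mem_setOf_eq]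
          exact aux_pt M (|X 0 ω - μP| ^ q)
      _ = ∑' k : ℕ, ∫⁻ ω, Set.indicator {ω | 4 * ((M + k : ℕ) : ℝ) < |X 0 ω - μP| ^ q}
            (fun _ => (8 : ℝ≥0∞)) ω ∂P :=
          lintegral_tsum fun k => ((measurable_const.indicator (hsetY _))).aemeasurable
      _ = ∑' k : ℕ, 8 * P {ω | 4 * ((M + k : ℕ) : ℝ) < |X 0 ω - μP| ^ q} := by
          refine tsum_congr fun k => ?_
          rw [lintegral_indicator (hsetY _), setLIntegral_const, mul_comm]
  -- Step B: compare with probabilities of the events A j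
  have hstep : ∀ j : ℕ, 1 ≤ j →
      P {ω | 4 * (j : ℝ) < |X 0 ω - μP| ^ q} ≤ P (A j) := by
    intro j hj
    have hsub : {ω | 4 * (j : ℝ) < |X 0 ω - μP| ^ q} ⊆ X 0 ⁻¹' sf j := by
      intro ω hω
      simp only [Set.mem_setOf_eq] at hω
      show 2 * (j : ℝ) ^ (1 / q) < |X 0 ω - μP|
      by_contra hcon
      push_neg at hcon
      have ha : (0 : ℝ) ≤ |X 0 ω - μP| := abs_nonneg _
      have h2 : |X 0 ω - μP| ^ q ≤ (2 * (j : ℝ) ^ (1 / q)) ^ q :=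
        Real.rpow_le_rpow ha hcon hq0.le
      have h3 : (2 * (j : ℝ) ^ (1 / q)) ^ q = 2 ^ q * (j : ℝ) := by
        rw [Real.mul_rpow (by norm_num) (Real.rpow_nonneg (Nat.cast_nonneg j) _),
          ← Real.rpow_mul (Nat.cast_nonneg j), one_div, inv_mul_cancel₀ hq0.ne',
          Real.rpow_one]
      have h4 : (2 : ℝ) ^ q ≤ 4 := by
        have h5 := Real.rpow_le_rpow_of_exponent_le (by norm_num : (1:ℝ) ≤ 2) hq2.le
        have h6 : (2 : ℝ) ^ (2 : ℝ) = 4 := by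
          rw [show (2 : ℝ) = ((2 : ℕ) : ℝ) by norm_num]
          rw [Real.rpow_natCast]; norm_num
        linarith
      have hj' : (0 : ℝ) ≤ (j : ℝ) := Nat.cast_nonneg j
      nlinarith
    calc P {ω | 4 * (j : ℝ) < |X 0 ω - μP| ^ q} ≤ P (X 0 ⁻¹' sf j) := measure_mono hsub
      _ = P (A j) := ((hiid P hP j).measure_mem_eq (hsf_meas j)).symm
  -- get a finite set with large sum of probabilities
  have hT : ENNReal.ofReal (ε / 16) < ∑' k : ℕ, P (A (M + k)) := by
    by_contra hcon
    push_neg at hcon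
    have h1 : ∑' k : ℕ, 8 * P {ω | 4 * ((M + k : ℕ) : ℝ) < |X 0 ω - μP| ^ q}
        ≤ 8 * ENNReal.ofReal (ε / 16) := by
      rw [ENNReal.tsum_mul_left]
      refine mul_le_mul_right (le_trans (ENNReal.tsum_le_tsum fun k => ?_) hcon) 8
      exact_mod_cast hstep (M + k) (by omega)
    have h2 : (8 : ℝ≥0∞) * ENNReal.ofReal (ε / 16) = ENNReal.ofReal (ε / 2) := by
      rw [show (8 : ℝ≥0∞) = ENNReal.ofReal 8 from (ENNReal.ofReal_ofNat 8).symm,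
        ← ENNReal.ofReal_mul (by norm_num)]
      congr 1
      ring
    have h3 : ENNReal.ofReal ε ≤ ENNReal.ofReal (ε / 2) := le_trans hsumA (h2 ▸ h1)
    rw [ENNReal.ofReal_le_ofReal_iff (by linarith)] at h3
    linarith
  rw [ENNReal.tsum_eq_iSup_sum, lt_iSup_iff] at hT
  obtain ⟨s, hs⟩ := hT
  set t := s.image (fun k => M + k) with ht
  have hsum_t : ENNReal.ofReal (ε / 16) < ∑ j ∈ t, P (A j) := by
    rw [ht, Finset.sum_image (fun a _ b _ h => by omega)]
    exact hs
  have hmem_t : ∀ j ∈ t, M ≤ j := by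
    intro j hj
    rw [ht, Finset.mem_image] at hj
    obtain ⟨k, _, rfl⟩ := hj
    omega
  -- real-valued probabilities
  set r : ℕ → ℝ := fun j => (P (A j)).toReal with hr
  have hr0 : ∀ j, 0 ≤ r j := fun j => ENNReal.toReal_nonneg
  have hr1 : ∀ j, r j ≤ 1 := fun j => by
    have := prob_le_one (μ := P) (s := A j)
    simpa [hr] using ENNReal.toReal_mono ENNReal.one_ne_top this
  have hPof : ∀ j, P (A j) = ENNReal.ofReal (r j) :=
    fun j => (ENNReal.ofReal_toReal (measure_ne_top P _)).symm
  have hsum_real : ε / 16 ≤ ∑ j ∈ t, r j := by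
    have h1 : (∑ j ∈ t, P (A j)).toReal = ∑ j ∈ t, r j :=
      ENNReal.toReal_sum fun j _ => measure_ne_top P _
    have h2 := ENNReal.toReal_mono (by
        rw [← h1] at *
        exact ENNReal.sum_ne_top.mpr fun j _ => measure_ne_top P _) hsum_t.le
    rwa [ENNReal.toReal_ofReal (by linarith), h1] at h2
  -- independence: product bound for the complements
  have hind := (hindep P hP).measure_inter_preimage_eq_mul
    (S := t) (sets := fun j => (sf j)ᶜ) (fun j _ => (hsf_meas j).compl)
  have hprod_eq : P (⋂ j ∈ t, (A j)ᶜ) = ∏ j ∈ t, (1 - P (A j)) := by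
    have h1 : (⋂ j ∈ t, (A j)ᶜ) = ⋂ j ∈ t, X j ⁻¹' (sf j)ᶜ := by
      simp [hA, Set.preimage_compl]
    rw [h1, hind]
    refine Finset.prod_congr rfl fun j _ => ?_
    rw [show X j ⁻¹' (sf j)ᶜ = (A j)ᶜ from by simp [hA, Set.preimage_compl]]
    exact prob_compl_eq_one_sub (hA_meas j)
  have hprod_le : P (⋂ j ∈ t, (A j)ᶜ) ≤ ENNReal.ofReal (Real.exp (-(ε / 16))) := by
    rw [hprod_eq]
    have h1 : ∀ j ∈ t, (1 : ℝ≥0∞) - P (A j) = ENNReal.ofReal (1 - r j) := by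
      intro j _
      rw [hPof j, ENNReal.ofReal_sub _ (hr0 j), ENNReal.ofReal_one]
    rw [Finset.prod_congr rfl h1, ← ENNReal.ofReal_prod_of_nonneg
      (fun j _ => by linarith [hr1 j])]
    refine ENNReal.ofReal_le_ofReal ?_
    calc ∏ j ∈ t, (1 - r j) ≤ ∏ j ∈ t, Real.exp (-(r j)) := by
          refine Finset.prod_le_prod (fun j _ => by linarith [hr1 j]) fun j _ => ?_
          linarith [Real.add_one_le_exp (-(r j))]
      _ = Real.exp (∑ j ∈ t, -(r j)) := (Real.exp_sum t _).symm
      _ ≤ Real.exp (-(ε / 16)) := by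
          apply Real.exp_le_exp.mpr
          rw [Finset.sum_neg_distrib]
          linarith
  -- lower bound on the union
  have hunion : ENNReal.ofReal (1 - Real.exp (-(ε / 16))) ≤ P (⋃ j ∈ t, A j) := by
    have hcompl : (⋃ j ∈ t, A j)ᶜ = ⋂ j ∈ t, (A j)ᶜ := by
      simp [Set.compl_iUnion]
    have h1 : (1 : ℝ≥0∞) ≤ P (⋃ j ∈ t, A j) + P ((⋃ j ∈ t, A j)ᶜ) := by
      calc (1 : ℝ≥0∞) = P Set.univ := measure_univ.symm
        _ = P ((⋃ j ∈ t, A j) ∪ (⋃ j ∈ t, A j)ᶜ) := by rw [Set.union_compl_self]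
        _ ≤ _ := measure_union_le _ _
    have h2 : P ((⋃ j ∈ t, A j)ᶜ) ≤ ENNReal.ofReal (Real.exp (-(ε / 16))) :=
      hcompl ▸ hprod_le
    calc ENNReal.ofReal (1 - Real.exp (-(ε / 16)))
        = 1 - ENNReal.ofReal (Real.exp (-(ε / 16))) := by
          rw [ENNReal.ofReal_sub _ (Real.exp_pos _).le, ENNReal.ofReal_one]
      _ ≤ 1 - P ((⋃ j ∈ t, A j)ᶜ) := tsub_le_tsub_left h2 1
      _ ≤ P (⋃ j ∈ t, A j) := by
          rw [tsub_le_iff_right]; exact h1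
  -- inclusion into the target event
  refine le_trans hunion (measure_mono ?_)
  intro ω hω
  simp only [Set.mem_iUnion] at hω
  obtain ⟨j, hjt, hωj⟩ := hω
  have hjM : M ≤ j := hmem_t j hjt
  have hωj' : 2 * (j : ℝ) ^ (1 / q) < |X j ω - μP| := hωj
  set S : ℕ → ℝ := fun k => ∑ i ∈ Finset.Icc 1 k, (X i ω - μP) with hS
  have hSsucc : S j = S (j - 1) + (X j ω - μP) := by
    have hj1 : j - 1 + 1 = j := by omega
    conv_lhs => rw [← hj1]
    rw [hS]
    simp only
    rw [Finset.sum_Icc_succ_top (by omega : 1 ≤ j - 1 + 1), hj1]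
  have hjpos : (0 : ℝ) < (j : ℝ) ^ (1 / q) :=
    Real.rpow_pos_of_pos (by exact_mod_cast (by omega : 0 < j)) _
  have hcases : (j : ℝ) ^ (1 / q) < |S j| ∨ (j : ℝ) ^ (1 / q) < |S (j - 1)| := by
    by_contra hcon
    push_neg at hcon
    have h1 : |X j ω - μP| = |S j - S (j - 1)| := by rw [hSsucc]; ring_nf
    have h2 : |S j - S (j - 1)| ≤ |S j| + |S (j - 1)| := abs_sub _ _
    rw [h1] at hωj'
    linarith [hcon.1, hcon.2]
  rcases hcases with h | h
  · refine ⟨j, by omega, ?_⟩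
    show (1 : ℝ) / 2 ≤ |((j : ℝ) ^ (1 / q))⁻¹ * S j|
    rw [abs_mul, abs_inv, abs_of_pos hjpos]
    have : (1 : ℝ) ≤ ((j : ℝ) ^ (1 / q))⁻¹ * |S j| := by
      calc (1 : ℝ) = ((j : ℝ) ^ (1 / q))⁻¹ * ((j : ℝ) ^ (1 / q)) :=
            (inv_mul_cancel₀ hjpos.ne').symm
        _ ≤ _ := mul_le_mul_of_nonneg_left h.le (inv_nonneg.mpr hjpos.le)
    linarith
  · refine ⟨j - 1, by omega, ?_⟩
    have hj1pos : (0 : ℝ) < ((j - 1 : ℕ) : ℝ) ^ (1 / q) :=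
      Real.rpow_pos_of_pos (by exact_mod_cast (by omega : 0 < j - 1)) _
    have hle : ((j - 1 : ℕ) : ℝ) ^ (1 / q) ≤ (j : ℝ) ^ (1 / q) :=
      Real.rpow_le_rpow (Nat.cast_nonneg _) (Nat.cast_le.mpr (by omega)) (by positivity)
    show (1 : ℝ) / 2 ≤ |(((j - 1 : ℕ) : ℝ) ^ (1 / q))⁻¹ * S (j - 1)|
    rw [abs_mul, abs_inv, abs_of_pos hj1pos]
    have : (1 : ℝ) ≤ (((j - 1 : ℕ) : ℝ) ^ (1 / q))⁻¹ * |S (j - 1)| := by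
      calc (1 : ℝ) = (((j - 1 : ℕ) : ℝ) ^ (1 / q))⁻¹ * (((j - 1 : ℕ) : ℝ) ^ (1 / q)) :=
            (inv_mul_cancel₀ hj1pos.ne').symm
        _ ≤ _ := mul_le_mul_of_nonneg_left (by linarith) (inv_nonneg.mpr hj1pos.le)
    linarith
end

section
/- Let (X_n) be i.i.d. under each P in a family 𝒫 with 1 < q < 2, Y := X − E_P X, and suppose lim_{m→∞} sup_{P∈𝒫} E_P(|Y|^q 1{|Y|^q > m}) = 0. Then with Z_n := Y_n/n^{1/q} and Z_n^{≤1} := Z_n·1{|Z_n| ≤ 1}: lim_{m→∞} sup_{P∈𝒫} Σ_{n=m}^∞ |E_P Z_n^{≤1}| = 0, lim_{m→∞} sup_{P∈𝒫} Σ_{n=m}^∞ Var_P Z_n^{≤1} = 0, and lim_{m→∞} sup_{P∈𝒫} Σ_{n=m}^∞ P(|Y| > n^{1/q}) = 0. -/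
open MeasureTheory ProbabilityTheory Filter


open MeasureTheory ProbabilityTheory Filter Real Set

private lemma rpow_mvt {p x y : ℝ} (hp0 : p ≠ 0) (hx : 0 < x) (hxy : x < y) :
    ∃ c ∈ Set.Ioo x y, y ^ p - x ^ p = p * c ^ (p - 1) * (y - x) := by
  obtain ⟨c, hc, hc'⟩ := exists_hasDerivAt_eq_slope (fun t => t ^ p)
    (fun t => p * t ^ (p - 1)) hxy
    (fun t ht => (Real.continuousAt_rpow_const t p
      (Or.inl (ne_of_gt (lt_of_lt_of_le hx ht.1)))).continuousWithinAt)
    (fun t ht => Real.hasDerivAt_rpow_const (Or.inl (ne_of_gt (hx.trans ht.1))))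
  refine ⟨c, hc, ?_⟩
  have hyx : y - x ≠ 0 := sub_ne_zero.2 (ne_of_gt hxy)
  field_simp at hc'
  linarith [hc']

private lemma lemA {p x y : ℝ} (hp0 : 0 < p) (hp1 : p < 1) (hx : 0 ≤ x) (hxy : x < y) :
    p * y ^ (p - 1) * (y - x) ≤ y ^ p - x ^ p := by
  have hy : 0 < y := lt_of_le_of_lt hx hxy
  rcases eq_or_lt_of_le hx with h0 | h0
  · subst h0
    rw [Real.zero_rpow (ne_of_gt hp0), sub_zero, sub_zero]
    have : y ^ (p - 1) * y = y ^ p := by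
      rw [← Real.rpow_add_one (ne_of_gt hy)]; ring_nf
    calc p * y ^ (p - 1) * y = p * y ^ p := by rw [mul_assoc, this]
      _ ≤ 1 * y ^ p := by
          exact mul_le_mul_of_nonneg_right hp1.le (Real.rpow_nonneg hy.le _)
      _ = y ^ p := one_mul _
  · obtain ⟨c, hc, hceq⟩ := rpow_mvt (ne_of_gt hp0) h0 hxy
    rw [hceq]
    have hcy : c ^ (p - 1) ≥ y ^ (p - 1) :=
      Real.rpow_le_rpow_of_nonpos (h0.trans hc.1) hc.2.le (by linarith)
    have := mul_le_mul_of_nonneg_right (mul_le_mul_of_nonneg_left hcy hp0.le)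
      (by linarith : (0:ℝ) ≤ y - x)
    linarith

private lemma lemB {p x y : ℝ} (hp : p < 0) (hx : 0 < x) (hxy : x < y) :
    (-p) * y ^ (p - 1) * (y - x) ≤ x ^ p - y ^ p := by
  obtain ⟨c, hc, hceq⟩ := rpow_mvt (ne_of_lt hp) hx hxy
  have hcy : y ^ (p - 1) ≤ c ^ (p - 1) :=
    Real.rpow_le_rpow_of_nonpos (hx.trans hc.1) hc.2.le (by linarith)
  have h1 : x ^ p - y ^ p = (-p) * c ^ (p - 1) * (y - x) := by linarith
  rw [h1]
  have := mul_le_mul_of_nonneg_right (mul_le_mul_of_nonneg_left hcy (by linarith : (0:ℝ) ≤ -p))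
    (by linarith : (0:ℝ) ≤ y - x)
  linarith

private lemma sumA {p : ℝ} (hp0 : 0 < p) (hp1 : p < 1) (K : ℕ) :
    ∑ i ∈ Finset.range K, ((i : ℝ) + 1) ^ (p - 1) ≤ (K : ℝ) ^ p / p := by
  have key : ∀ i : ℕ, ((i : ℝ) + 1) ^ (p - 1) ≤ (((i : ℝ) + 1) ^ p - (i : ℝ) ^ p) / p := by
    intro i
    have h := lemA hp0 hp1 (Nat.cast_nonneg i) (by linarith : (i:ℝ) < (i:ℝ) + 1)
    rw [le_div_iff₀ hp0]
    nlinarith [h]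
  calc ∑ i ∈ Finset.range K, ((i : ℝ) + 1) ^ (p - 1)
      ≤ ∑ i ∈ Finset.range K, (((i : ℝ) + 1) ^ p - (i : ℝ) ^ p) / p :=
        Finset.sum_le_sum fun i _ => key i
    _ = (∑ i ∈ Finset.range K, ((((i+1) : ℕ) : ℝ) ^ p - ((i : ℕ) : ℝ) ^ p)) / p := by
        rw [Finset.sum_div]; congr 1; ext i; push_cast; ring_nf
    _ = ((K : ℝ) ^ p - ((0:ℕ) : ℝ) ^ p) / p := by
        rw [Finset.sum_range_sub (f := fun i : ℕ => ((i : ℕ) : ℝ) ^ p)]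
    _ ≤ (K : ℝ) ^ p / p := by
        rw [Nat.cast_zero, Real.zero_rpow (ne_of_gt hp0), sub_zero]

private lemma sumB {p : ℝ} (hp : p < 0) {n₀ : ℕ} (h1 : 1 ≤ n₀) (K : ℕ) :
    ∑ j ∈ Finset.range K, ((n₀ + j : ℕ) : ℝ) ^ (p - 1) ≤ (1 + 1 / (-p)) * (n₀ : ℝ) ^ p := by
  have hn₀ : (1:ℝ) ≤ (n₀ : ℝ) := by exact_mod_cast h1
  have hrhs0 : (0:ℝ) ≤ (n₀ : ℝ) ^ p := Real.rpow_nonneg (by linarith) _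
  have hc : (0:ℝ) < -p := by linarith
  rcases K with _ | K'
  · simp only [Finset.range_zero, Finset.sum_empty]
    have : (0:ℝ) ≤ 1 / (-p) := by positivity
    nlinarith
  · rw [Finset.sum_range_succ']
    have hfirst : ((n₀ + 0 : ℕ) : ℝ) ^ (p - 1) ≤ (n₀ : ℝ) ^ p := by
      rw [Nat.add_zero]
      exact Real.rpow_le_rpow_of_exponent_le hn₀ (by linarith)
    have hrest : ∑ j ∈ Finset.range K', ((n₀ + (j + 1) : ℕ) : ℝ) ^ (p - 1)
        ≤ (n₀ : ℝ) ^ p / (-p) := by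
      have key : ∀ j : ℕ, ((n₀ + (j + 1) : ℕ) : ℝ) ^ (p - 1)
          ≤ (((n₀ + j : ℕ) : ℝ) ^ p - ((n₀ + (j+1) : ℕ) : ℝ) ^ p) / (-p) := by
        intro j
        have hx : (0:ℝ) < ((n₀ + j : ℕ) : ℝ) := by
          have : (1:ℝ) ≤ ((n₀ + j : ℕ) : ℝ) := by exact_mod_cast Nat.le_add_right_of_le h1
          linarith
        have hxy : ((n₀ + j : ℕ) : ℝ) < ((n₀ + (j+1) : ℕ) : ℝ) := by
          push_cast; linarith
        have h := lemB hp hx hxy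
        rw [le_div_iff₀ hc]
        have hd : ((n₀ + (j+1) : ℕ) : ℝ) - ((n₀ + j : ℕ) : ℝ) = 1 := by push_cast; ring
        rw [hd] at h
        nlinarith [h]
      calc ∑ j ∈ Finset.range K', ((n₀ + (j + 1) : ℕ) : ℝ) ^ (p - 1)
          ≤ ∑ j ∈ Finset.range K',
            (((n₀ + j : ℕ) : ℝ) ^ p - ((n₀ + (j+1) : ℕ) : ℝ) ^ p) / (-p) :=
            Finset.sum_le_sum fun j _ => key j
        _ = (∑ j ∈ Finset.range K',
            (((n₀ + j : ℕ) : ℝ) ^ p - ((n₀ + (j+1) : ℕ) : ℝ) ^ p)) / (-p) := by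
            rw [Finset.sum_div]
        _ = (((n₀ + 0 : ℕ) : ℝ) ^ p - ((n₀ + K' : ℕ) : ℝ) ^ p) / (-p) := by
            rw [Finset.sum_range_sub' (f := fun j : ℕ => ((n₀ + j : ℕ) : ℝ) ^ p)]
        _ ≤ (n₀ : ℝ) ^ p / (-p) := by
            rw [Nat.add_zero]
            have h0 : (0:ℝ) ≤ ((n₀ + K' : ℕ) : ℝ) ^ p := Real.rpow_nonneg (Nat.cast_nonneg _) _
            gcongr
            linarith
    have : (1 + 1/(-p)) * (n₀:ℝ)^p = (n₀:ℝ)^p + (n₀:ℝ)^p / (-p) := by ring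
    rw [this]
    linarith

open MeasureTheory ProbabilityTheory Filter Real Set
open scoped ENNReal NNReal

private lemma ite_ofReal (c : Prop) [Decidable c] (x : ℝ) :
    (if c then ENNReal.ofReal x else 0) = ENNReal.ofReal (if c then x else 0) := by
  split <;> simp

private lemma P3 {W : ℝ} (m : ℕ) (hm : 1 ≤ m) :
    (∑' k : ℕ, if ((m + k : ℕ) : ℝ) < W then (1 : ℝ≥0∞) else 0)
      ≤ if (m : ℝ) < W then ENNReal.ofReal W else 0 := by
  by_cases hW : (m : ℝ) < W
  · rw [if_pos hW]
    set N := ⌊W⌋₊ with hN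
    have hW0 : (0:ℝ) ≤ W := le_trans (Nat.cast_nonneg m) hW.le
    calc (∑' k : ℕ, if ((m + k : ℕ) : ℝ) < W then (1 : ℝ≥0∞) else 0)
        ≤ ∑' k : ℕ, if k < N then (1 : ℝ≥0∞) else 0 := by
          apply ENNReal.tsum_le_tsum
          intro k
          split
          · rename_i h
            have h1 : m + k ≤ N := Nat.le_floor (by exact_mod_cast h.le)
            rw [if_pos (by omega)]
          · exact zero_le
      _ = ∑ k ∈ Finset.range N, (1 : ℝ≥0∞) := by
          rw [tsum_eq_sum (s := Finset.range N) (fun k hk => if_neg (by simpa using hk))]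
          exact Finset.sum_congr rfl fun k hk => if_pos (Finset.mem_range.mp hk)
      _ = (N : ℝ≥0∞) := by simp
      _ ≤ ENNReal.ofReal W := by
          rw [← ENNReal.ofReal_natCast]
          exact ENNReal.ofReal_le_ofReal (Nat.floor_le hW0)
  · rw [if_neg hW]
    have : ∀ k : ℕ, (if ((m + k : ℕ) : ℝ) < W then (1 : ℝ≥0∞) else 0) = 0 := by
      intro k
      rw [if_neg]
      push_neg at hW ⊢
      calc W ≤ (m : ℝ) := hW
        _ ≤ ((m + k : ℕ) : ℝ) := by push_cast; linarith [Nat.cast_nonneg (α := ℝ) k]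
    simp only [this, tsum_zero]
    exact le_refl 0

private lemma P1 {q : ℝ} (hq1 : 1 < q) {y : ℝ} (hy : 0 ≤ y) (m : ℕ) (hm : 1 ≤ m) :
    (∑' k : ℕ, if ((m + k : ℕ) : ℝ) < y ^ q then
        ENNReal.ofReal (((m + k : ℕ) : ℝ) ^ (-(1/q)) * y) else 0)
      ≤ if (m : ℝ) < y ^ q then ENNReal.ofReal ((q / (q - 1)) * y ^ q) else 0 := by
  have hq0 : (0:ℝ) < q := by linarith
  by_cases hW : (m : ℝ) < y ^ q
  · rw [if_pos hW]
    have hyq0 : (0:ℝ) < y ^ q := lt_of_le_of_lt (by positivity) hW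
    have hy0 : 0 < y := by
      rcases eq_or_lt_of_le hy with h | h
      · exfalso; rw [← h, Real.zero_rpow (ne_of_gt hq0)] at hyq0; linarith
      · exact h
    set N := ⌊y ^ q⌋₊ with hN
    set p : ℝ := 1 - 1/q with hp
    have hp0 : 0 < p := by
      have : 1/q < 1 := by rw [div_lt_one hq0]; linarith
      simp only [hp]; linarith
    have hp1 : p < 1 := by
      have : 0 < 1/q := by positivity
      simp only [hp]; linarith
    apply ENNReal.summable.tsum_le_of_sum_range_le
    intro K
    have hsum : ∀ k : ℕ, (if ((m + k : ℕ) : ℝ) < y ^ q then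
        ENNReal.ofReal (((m + k : ℕ) : ℝ) ^ (-(1/q)) * y) else 0)
        = ENNReal.ofReal (if ((m + k : ℕ) : ℝ) < y ^ q then
          ((m + k : ℕ) : ℝ) ^ (-(1/q)) * y else 0) := fun k => ite_ofReal _ _
    simp only [hsum]
    rw [← ENNReal.ofReal_sum_of_nonneg (fun k _ => by split <;> positivity)]
    apply ENNReal.ofReal_le_ofReal
    -- real inequality
    rw [← Finset.sum_filter]
    set S := (Finset.range K).filter (fun k => ((m + k : ℕ) : ℝ) < y ^ q) with hS
    have hmem : ∀ k ∈ S, m + k ≤ N := by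
      intro k hk
      rw [hS, Finset.mem_filter] at hk
      exact Nat.le_floor (by exact_mod_cast hk.2.le)
    set g : ℕ → ℝ := fun i => (((i + 1 : ℕ)) : ℝ) ^ (-(1/q)) * y with hg
    have step1 : ∑ k ∈ S, ((m + k : ℕ) : ℝ) ^ (-(1/q)) * y = ∑ k ∈ S, g (m + k - 1) := by
      apply Finset.sum_congr rfl
      intro k _
      have : m + k - 1 + 1 = m + k := by omega
      rw [hg]; simp only [this]
    have step2 : ∑ k ∈ S, g (m + k - 1) = ∑ i ∈ S.image (fun k => m + k - 1), g i := by
      rw [Finset.sum_image]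
      intro k1 _ k2 _ h
      simp only at h
      omega
    have step3 : ∑ i ∈ S.image (fun k => m + k - 1), g i ≤ ∑ i ∈ Finset.range N, g i := by
      apply Finset.sum_le_sum_of_subset_of_nonneg
      · intro i hi
        rw [Finset.mem_image] at hi
        obtain ⟨k, hk, rfl⟩ := hi
        have := hmem k hk
        rw [Finset.mem_range]
        omega
      · intro i _ _
        rw [hg]; positivity
    have step4 : ∑ i ∈ Finset.range N, g i ≤ (N : ℝ) ^ p / p * y := by
      have : ∑ i ∈ Finset.range N, g i = (∑ i ∈ Finset.range N, ((i:ℝ) + 1) ^ (p - 1)) * y := by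
        rw [Finset.sum_mul]
        apply Finset.sum_congr rfl
        intro i _
        have hpe : p - 1 = -(1/q) := by rw [hp]; ring
        rw [hg, hpe]
        norm_cast
      rw [this]
      exact mul_le_mul_of_nonneg_right (sumA hp0 hp1 N) hy
    have step5 : (N : ℝ) ^ p / p * y ≤ (q / (q-1)) * y ^ q := by
      have h1 : (N : ℝ) ^ p ≤ (y ^ q) ^ p :=
        Real.rpow_le_rpow (Nat.cast_nonneg N) (Nat.floor_le hyq0.le) hp0.le
      have h2 : (y ^ q) ^ p = y ^ (q - 1) := by
        rw [← Real.rpow_mul hy]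
        congr 1
        rw [hp]
        field_simp
      have h3 : y ^ (q - 1) * y = y ^ q := by
        rw [← Real.rpow_add_one (ne_of_gt hy0)]
        ring_nf
      calc (N : ℝ) ^ p / p * y ≤ (y ^ q) ^ p / p * y := by
            exact mul_le_mul_of_nonneg_right ((div_le_div_iff_of_pos_right hp0).mpr h1) hy
        _ = y ^ (q-1) * y / p := by rw [h2]; ring
        _ = y ^ q / p := by rw [h3]
        _ = (q / (q-1)) * y ^ q := by
            rw [hp]
            field_simp
    calc ∑ k ∈ S, ((m + k : ℕ) : ℝ) ^ (-(1/q)) * y = ∑ i ∈ S.image (fun k => m + k - 1), g i := by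
          rw [step1, step2]
      _ ≤ (q / (q-1)) * y ^ q := le_trans step3 (le_trans step4 step5)
  · rw [if_neg hW]
    have : ∀ k : ℕ, (if ((m + k : ℕ) : ℝ) < y ^ q then
        ENNReal.ofReal (((m + k : ℕ) : ℝ) ^ (-(1/q)) * y) else 0) = 0 := by
      intro k
      rw [if_neg]
      push_neg at hW ⊢
      calc y ^ q ≤ (m : ℝ) := hW
        _ ≤ ((m + k : ℕ) : ℝ) := by push_cast; linarith [Nat.cast_nonneg (α := ℝ) k]
    simp only [this, tsum_zero]
    exact le_refl 0
private lemma P2 {q : ℝ} (hq1 : 1 < q) (hq2 : q < 2) {y : ℝ} (hy : 0 ≤ y) (m : ℕ) (hm : 1 ≤ m) :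
    (∑' k : ℕ, if y ^ q ≤ ((m + k : ℕ) : ℝ) then
        ENNReal.ofReal (((m + k : ℕ) : ℝ) ^ (-(2/q)) * y ^ 2) else 0)
      ≤ ENNReal.ofReal ((1 + q/(2-q)) * (max (m:ℝ) (y^q)) ^ ((q-2)/q) * y ^ 2) := by
  have hq0 : (0:ℝ) < q := by linarith
  set p : ℝ := (q - 2)/q with hp
  have hpneg : p < 0 := by
    rw [hp]
    apply div_neg_of_neg_of_pos (by linarith) hq0
  set n₀ : ℕ := max m ⌈y ^ q⌉₊ with hn₀
  have hn₀1 : 1 ≤ n₀ := le_trans hm (le_max_left _ _)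
  apply ENNReal.summable.tsum_le_of_sum_range_le
  intro K
  simp only [ite_ofReal]
  rw [← ENNReal.ofReal_sum_of_nonneg (fun k _ => by split <;> positivity)]
  apply ENNReal.ofReal_le_ofReal
  rw [← Finset.sum_filter]
  set S := (Finset.range K).filter (fun k => y ^ q ≤ ((m + k : ℕ) : ℝ)) with hS
  have hmem : ∀ k ∈ S, n₀ ≤ m + k ∧ k < K := by
    intro k hk
    rw [hS, Finset.mem_filter, Finset.mem_range] at hk
    refine ⟨max_le (by omega) (Nat.ceil_le.mpr (by exact_mod_cast hk.2)), hk.1⟩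
  set g : ℕ → ℝ := fun j => ((n₀ + j : ℕ) : ℝ) ^ (-(2/q)) * y ^ 2 with hg
  have step1 : ∑ k ∈ S, ((m + k : ℕ) : ℝ) ^ (-(2/q)) * y ^ 2
      = ∑ k ∈ S, g (m + k - n₀) := by
    apply Finset.sum_congr rfl
    intro k hk
    have h := (hmem k hk).1
    simp only [hg]
    rw [show n₀ + (m + k - n₀) = m + k by omega]
  have step2 : ∑ k ∈ S, g (m + k - n₀) = ∑ j ∈ S.image (fun k => m + k - n₀), g j := by
    rw [Finset.sum_image]
    intro k1 h1 k2 h2 h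
    have := (hmem k1 h1).1
    have := (hmem k2 h2).1
    simp only at h
    omega
  have step3 : ∑ j ∈ S.image (fun k => m + k - n₀), g j ≤ ∑ j ∈ Finset.range K, g j := by
    apply Finset.sum_le_sum_of_subset_of_nonneg
    · intro j hj
      rw [Finset.mem_image] at hj
      obtain ⟨k, hk, rfl⟩ := hj
      have h1 := (hmem k hk).1
      have h2 := (hmem k hk).2
      have h3 : m ≤ n₀ := le_max_left _ _
      rw [Finset.mem_range]
      omega
    · intro j _ _
      rw [hg]; positivity
  have step4 : ∑ j ∈ Finset.range K, g j ≤ (1 + 1/(-p)) * (n₀ : ℝ) ^ p * y ^ 2 := by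
    have he : ∀ j : ℕ, g j = ((n₀ + j : ℕ) : ℝ) ^ (p - 1) * y ^ 2 := by
      intro j
      rw [hg]
      congr 2
      rw [hp]
      field_simp
      rw [mul_comm]; congr 1; ring
    calc ∑ j ∈ Finset.range K, g j
        = (∑ j ∈ Finset.range K, ((n₀ + j : ℕ) : ℝ) ^ (p - 1)) * y ^ 2 := by
          rw [Finset.sum_mul]
          exact Finset.sum_congr rfl fun j _ => he j
      _ ≤ (1 + 1/(-p)) * (n₀ : ℝ) ^ p * y ^ 2 :=
          mul_le_mul_of_nonneg_right (sumB hpneg hn₀1 K) (by positivity)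
  have step5 : (1 + 1/(-p)) * (n₀ : ℝ) ^ p * y ^ 2
      ≤ (1 + q/(2-q)) * (max (m:ℝ) (y^q)) ^ p * y ^ 2 := by
    have hC : 1 + 1/(-p) = 1 + q/(2-q) := by
      rw [hp, show -((q-2)/q) = (2-q)/q by ring, one_div_div]
    have hmax0 : (0:ℝ) < max (m:ℝ) (y^q) := by
      have : (1:ℝ) ≤ (m:ℝ) := by exact_mod_cast hm
      have := le_max_left (m:ℝ) (y^q)
      linarith
    have hmaxn : max (m:ℝ) (y^q) ≤ (n₀:ℝ) := by
      apply max_le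
      · exact_mod_cast le_max_left m ⌈y ^ q⌉₊
      · calc y ^ q ≤ (⌈y ^ q⌉₊ : ℝ) := Nat.le_ceil _
          _ ≤ (n₀:ℝ) := by exact_mod_cast le_max_right m ⌈y ^ q⌉₊
    have h1 : (n₀ : ℝ) ^ p ≤ (max (m:ℝ) (y^q)) ^ p :=
      Real.rpow_le_rpow_of_nonpos hmax0 hmaxn hpneg.le
    rw [hC]
    have hC0 : (0:ℝ) ≤ 1 + q/(2-q) := by
      have : (0:ℝ) < q/(2-q) := by
        apply div_pos hq0
        linarith
      linarith
    exact mul_le_mul_of_nonneg_right (mul_le_mul_of_nonneg_left h1 hC0) (by positivity)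
  calc ∑ k ∈ S, ((m + k : ℕ) : ℝ) ^ (-(2/q)) * y ^ 2
      = ∑ j ∈ S.image (fun k => m + k - n₀), g j := by rw [step1, step2]
    _ ≤ (1 + q/(2-q)) * (max (m:ℝ) (y^q)) ^ p * y ^ 2 :=
        le_trans step3 (le_trans step4 step5)
section Aux

variable {Ω : Type*} [MeasurableSpace Ω]

private lemma Wmeas {Y : Ω → ℝ} (hY : Measurable Y) {q : ℝ} :
    Measurable (fun ω => |Y ω| ^ q) :=
  hY.abs.pow measurable_const

private lemma aux3 (P : Measure Ω) [IsProbabilityMeasure P] {Y : Ω → ℝ} (hY : Measurable Y)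
    {q : ℝ} (hq1 : 1 < q) (m : ℕ) (hm : 1 ≤ m) :
    ∑' k : ℕ, P {ω | ((m + k : ℕ) : ℝ) ^ (1/q) < |Y ω|}
      ≤ ∫⁻ ω in {ω | (m : ℝ) < |Y ω| ^ q}, ENNReal.ofReal (|Y ω| ^ q) ∂P := by
  have hq0 : (0:ℝ) < q := by linarith
  have hev : ∀ n : ℕ, {ω | ((n : ℕ) : ℝ) ^ (1/q) < |Y ω|} = {ω | ((n : ℕ) : ℝ) < |Y ω| ^ q} := by
    intro n
    ext ω
    simp only [Set.mem_setOf_eq, one_div]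
    exact Real.rpow_inv_lt_iff_of_pos (Nat.cast_nonneg n) (abs_nonneg _) hq0
  have hPs : ∀ n : ℕ, P {ω | ((n : ℕ) : ℝ) ^ (1/q) < |Y ω|}
      = ∫⁻ ω, (if ((n : ℕ) : ℝ) < |Y ω| ^ q then (1 : ℝ≥0∞) else 0) ∂P := by
    intro n
    rw [hev n]
    have hs : MeasurableSet {ω | ((n : ℕ) : ℝ) < |Y ω| ^ q} :=
      measurableSet_lt measurable_const (Wmeas hY)
    rw [← MeasureTheory.lintegral_indicator_one hs]
    congr 1
  calc ∑' k : ℕ, P {ω | ((m + k : ℕ) : ℝ) ^ (1/q) < |Y ω|}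
      = ∑' k : ℕ, ∫⁻ ω, (if ((m + k : ℕ) : ℝ) < |Y ω| ^ q then (1 : ℝ≥0∞) else 0) ∂P := by
        exact tsum_congr fun k => hPs (m + k)
    _ = ∫⁻ ω, ∑' k : ℕ, (if ((m + k : ℕ) : ℝ) < |Y ω| ^ q then (1 : ℝ≥0∞) else 0) ∂P := by
        rw [← MeasureTheory.lintegral_tsum]
        intro k
        exact (Measurable.ite (measurableSet_lt measurable_const (Wmeas hY))
          measurable_const measurable_const).aemeasurable
    _ ≤ ∫⁻ ω, (if (m : ℝ) < |Y ω| ^ q then ENNReal.ofReal (|Y ω| ^ q) else 0) ∂P := by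
        apply MeasureTheory.lintegral_mono
        intro ω
        exact P3 m hm
    _ = ∫⁻ ω in {ω | (m : ℝ) < |Y ω| ^ q}, ENNReal.ofReal (|Y ω| ^ q) ∂P := by
        rw [← MeasureTheory.lintegral_indicator
          (measurableSet_lt measurable_const (Wmeas hY))]
        congr 1

end Aux
private lemma aux1 {Ω : Type*} [MeasurableSpace Ω] (P : Measure Ω) [IsProbabilityMeasure P]
    {Y : Ω → ℝ} (hY : Measurable Y) (hYint : Integrable Y P) (hY0 : ∫ ω, Y ω ∂P = 0)
    {q : ℝ} (hq1 : 1 < q) (m : ℕ) (hm : 1 ≤ m) :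
    ∑' k : ℕ, ENNReal.ofReal
        |∫ ω, (if |Y ω / ((m + k : ℕ) : ℝ) ^ (1/q)| ≤ 1 then
          Y ω / ((m + k : ℕ) : ℝ) ^ (1/q) else 0) ∂P|
      ≤ ENNReal.ofReal (q / (q - 1)) *
          ∫⁻ ω in {ω | (m : ℝ) < |Y ω| ^ q}, ENNReal.ofReal (|Y ω| ^ q) ∂P := by
  have hq0 : (0:ℝ) < q := by linarith
  -- the remainder function
  set R : ℕ → Ω → ℝ := fun n ω => if |Y ω / ((n : ℕ) : ℝ) ^ (1/q)| ≤ 1 then 0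
    else Y ω / ((n : ℕ) : ℝ) ^ (1/q) with hR
  have hcpos : ∀ n : ℕ, 1 ≤ n → (0:ℝ) < ((n : ℕ) : ℝ) ^ (1/q) := by
    intro n hn
    apply Real.rpow_pos_of_pos
    exact_mod_cast Nat.lt_of_lt_of_le Nat.zero_lt_one hn
  have hRmeas : ∀ n : ℕ, Measurable (R n) := by
    intro n
    apply Measurable.ite _ measurable_const (hY.div_const _)
    exact measurableSet_le (hY.div_const _).abs measurable_const
  have hRint : ∀ n : ℕ, Integrable (R n) P := by
    intro n
    apply (hYint.div_const (((n : ℕ) : ℝ) ^ (1/q))).mono (hRmeas n).aestronglyMeasurable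
    filter_upwards with ω
    rw [hR]
    simp only []
    split
    · simp only [norm_zero, norm_nonneg]
    · exact le_refl _
  -- step 1: bound each term
  have hterm : ∀ n : ℕ, 1 ≤ n → ENNReal.ofReal
      |∫ ω, (if |Y ω / ((n : ℕ) : ℝ) ^ (1/q)| ≤ 1 then
        Y ω / ((n : ℕ) : ℝ) ^ (1/q) else 0) ∂P|
      ≤ ∫⁻ ω, (if ((n : ℕ) : ℝ) < |Y ω| ^ q then
          ENNReal.ofReal (((n : ℕ) : ℝ) ^ (-(1/q)) * |Y ω|) else 0) ∂P := by
    intro n hn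
    set c := ((n : ℕ) : ℝ) ^ (1/q) with hc
    have hc0 : 0 < c := hcpos n hn
    have hint1 : Integrable (fun ω => Y ω / c) P := hYint.div_const c
    have hsplit : (fun ω => if |Y ω / c| ≤ 1 then Y ω / c else 0)
        = fun ω => Y ω / c - R n ω := by
      funext ω
      rw [hR]
      simp only [← hc]
      rcases em (|Y ω / c| ≤ 1) with h | h
      · rw [if_pos h, if_pos h, sub_zero]
      · rw [if_neg h, if_neg h, sub_self]
    have hI : ∫ ω, (if |Y ω / c| ≤ 1 then Y ω / c else 0) ∂P = - ∫ ω, R n ω ∂P := by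
      rw [hsplit, integral_sub hint1 (hRint n)]
      have : ∫ ω, Y ω / c ∂P = 0 := by
        rw [integral_div, hY0, zero_div]
      rw [this, zero_sub]
    rw [hI, abs_neg]
    have habs : |∫ ω, R n ω ∂P| ≤ ∫ ω, |R n ω| ∂P := by
      rw [← Real.norm_eq_abs]
      exact (norm_integral_le_integral_norm _).trans_eq (by simp [Real.norm_eq_abs])
    refine le_trans (ENNReal.ofReal_le_ofReal habs) ?_
    rw [MeasureTheory.ofReal_integral_eq_lintegral_ofReal ((hRint n).abs)
      (Filter.Eventually.of_forall fun ω => abs_nonneg _)]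
    apply MeasureTheory.lintegral_mono
    intro ω
    rw [hR]
    simp only []
    split
    · rename_i h
      simp only [abs_zero, ENNReal.ofReal_zero]
      exact zero_le
    · rename_i h
      push_neg at h
      have h1 : c < |Y ω| := by
        rw [abs_div, abs_of_pos hc0, lt_div_iff₀ hc0, one_mul] at h
        linarith
      have h2 : ((n : ℕ) : ℝ) < |Y ω| ^ q := by
        rw [hc, one_div] at h1
        exact (Real.rpow_inv_lt_iff_of_pos (Nat.cast_nonneg n) (abs_nonneg _) hq0).mp h1
      rw [if_pos h2]
      apply ENNReal.ofReal_le_ofReal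
      rw [abs_div, abs_of_pos hc0, div_eq_mul_inv, mul_comm]
      rw [hc, ← Real.rpow_neg (Nat.cast_nonneg n)]
  calc ∑' k : ℕ, ENNReal.ofReal
        |∫ ω, (if |Y ω / ((m + k : ℕ) : ℝ) ^ (1/q)| ≤ 1 then
          Y ω / ((m + k : ℕ) : ℝ) ^ (1/q) else 0) ∂P|
      ≤ ∑' k : ℕ, ∫⁻ ω, (if ((m + k : ℕ) : ℝ) < |Y ω| ^ q then
          ENNReal.ofReal (((m + k : ℕ) : ℝ) ^ (-(1/q)) * |Y ω|) else 0) ∂P :=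
        ENNReal.tsum_le_tsum fun k => hterm (m + k) (by omega)
    _ = ∫⁻ ω, ∑' k : ℕ, (if ((m + k : ℕ) : ℝ) < |Y ω| ^ q then
          ENNReal.ofReal (((m + k : ℕ) : ℝ) ^ (-(1/q)) * |Y ω|) else 0) ∂P := by
        rw [← MeasureTheory.lintegral_tsum]
        intro k
        apply Measurable.aemeasurable
        apply Measurable.ite (measurableSet_lt measurable_const (Wmeas hY)) _ measurable_const
        exact (hY.abs.const_mul _).ennreal_ofReal
    _ ≤ ∫⁻ ω, (if (m : ℝ) < |Y ω| ^ q then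
          ENNReal.ofReal ((q / (q - 1)) * |Y ω| ^ q) else 0) ∂P := by
        apply MeasureTheory.lintegral_mono
        intro ω
        exact P1 hq1 (abs_nonneg (Y ω)) m hm
    _ = ∫⁻ ω, ENNReal.ofReal (q / (q - 1)) *
          Set.indicator {ω | (m : ℝ) < |Y ω| ^ q}
            (fun ω => ENNReal.ofReal (|Y ω| ^ q)) ω ∂P := by
        apply MeasureTheory.lintegral_congr
        intro ω
        rw [Set.indicator_apply]
        by_cases h : (m : ℝ) < |Y ω| ^ q
        · rw [if_pos h, if_pos (show ω ∈ {ω | (m:ℝ) < |Y ω| ^ q} from h),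
            ENNReal.ofReal_mul (div_nonneg (by linarith) (by linarith))]
        · rw [if_neg h, if_neg (show ω ∉ {ω | (m:ℝ) < |Y ω| ^ q} from h), mul_zero]
    _ = ENNReal.ofReal (q / (q - 1)) *
          ∫⁻ ω in {ω | (m : ℝ) < |Y ω| ^ q}, ENNReal.ofReal (|Y ω| ^ q) ∂P := by
        rw [MeasureTheory.lintegral_const_mul _
            (((Wmeas hY).ennreal_ofReal).indicator
              (measurableSet_lt measurable_const (Wmeas hY))),
          MeasureTheory.lintegral_indicator
            (measurableSet_lt measurable_const (Wmeas hY))]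
private lemma aux2 {Ω : Type*} [MeasurableSpace Ω] (P : Measure Ω) [IsProbabilityMeasure P]
    {Y : Ω → ℝ} (hY : Measurable Y)
    {q : ℝ} (hq1 : 1 < q) (hq2 : q < 2) (m : ℕ) (hm : 1 ≤ m) :
    ∑' k : ℕ, ENNReal.ofReal (variance (fun ω =>
        if |Y ω / ((m + k : ℕ) : ℝ) ^ (1/q)| ≤ 1 then
          Y ω / ((m + k : ℕ) : ℝ) ^ (1/q) else 0) P)
      ≤ ∫⁻ ω, ENNReal.ofReal ((1 + q/(2-q)) *
          (max (m : ℝ) (|Y ω| ^ q)) ^ ((q-2)/q) * |Y ω| ^ 2) ∂P := by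
  have hq0 : (0:ℝ) < q := by linarith
  have hterm : ∀ n : ℕ, 1 ≤ n → ENNReal.ofReal (variance (fun ω =>
      if |Y ω / ((n : ℕ) : ℝ) ^ (1/q)| ≤ 1 then Y ω / ((n : ℕ) : ℝ) ^ (1/q) else 0) P)
      ≤ ∫⁻ ω, (if |Y ω| ^ q ≤ ((n : ℕ) : ℝ) then
          ENNReal.ofReal (((n : ℕ) : ℝ) ^ (-(2/q)) * |Y ω| ^ 2) else 0) ∂P := by
    intro n hn
    set c := ((n : ℕ) : ℝ) ^ (1/q) with hc
    have hn0 : (0:ℝ) < ((n : ℕ) : ℝ) := by exact_mod_cast Nat.lt_of_lt_of_le Nat.zero_lt_one hn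
    have hc0 : 0 < c := Real.rpow_pos_of_pos hn0 _
    set f : Ω → ℝ := fun ω => if |Y ω / c| ≤ 1 then Y ω / c else 0 with hf
    have hfmeas : Measurable f := by
      apply Measurable.ite _ (hY.div_const _) measurable_const
      exact measurableSet_le (hY.div_const _).abs measurable_const
    have hf2int : Integrable (fun ω => f ω ^ 2) P := by
      apply (integrable_const (1:ℝ)).mono ((hfmeas.pow_const 2).aestronglyMeasurable)
      filter_upwards with ω
      rw [Real.norm_eq_abs, Real.norm_eq_abs, abs_one, hf]
      simp only []
      split
      · rename_i h
        rw [abs_pow]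
        calc |Y ω / c| ^ 2 ≤ 1 ^ 2 := by
              apply pow_le_pow_left₀ (abs_nonneg _) h
          _ = 1 := one_pow 2
      · norm_num
    have hvar : variance f P ≤ ∫ ω, f ω ^ 2 ∂P := by
      have h := variance_le_expectation_sq (μ := P) (X := f) hfmeas.aestronglyMeasurable
      convert h using 1
      rfl
    calc ENNReal.ofReal (variance f P) ≤ ENNReal.ofReal (∫ ω, f ω ^ 2 ∂P) :=
          ENNReal.ofReal_le_ofReal hvar
      _ = ∫⁻ ω, ENNReal.ofReal (f ω ^ 2) ∂P :=
          MeasureTheory.ofReal_integral_eq_lintegral_ofReal hf2int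
            (Filter.Eventually.of_forall fun ω => sq_nonneg _)
      _ ≤ ∫⁻ ω, (if |Y ω| ^ q ≤ ((n : ℕ) : ℝ) then
            ENNReal.ofReal (((n : ℕ) : ℝ) ^ (-(2/q)) * |Y ω| ^ 2) else 0) ∂P := by
          apply MeasureTheory.lintegral_mono
          intro ω
          rw [hf]
          simp only []
          split
          · rename_i h
            have hcond : |Y ω| ^ q ≤ ((n : ℕ) : ℝ) := by
              rw [abs_div, abs_of_pos hc0, div_le_one hc0, hc, one_div] at h
              exact (Real.le_rpow_inv_iff_of_pos (abs_nonneg _) (le_of_lt hn0) hq0).mp h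
            rw [if_pos hcond]
            apply ENNReal.ofReal_le_ofReal
            have hcsq : (((n:ℕ):ℝ) ^ (1/q)) ^ (2:ℕ) = ((n:ℕ):ℝ) ^ (2/q) := by
              rw [← Real.rpow_natCast (((n:ℕ):ℝ) ^ (1/q)) 2, ← Real.rpow_mul (le_of_lt hn0)]
              congr 1
              push_cast
              ring
            apply le_of_eq
            rw [div_pow, hc, hcsq, Real.rpow_neg (le_of_lt hn0), ← sq_abs (Y ω)]
            ring
          · simp only [ne_eq, OfNat.ofNat_ne_zero, not_false_eq_true, zero_pow,
              ENNReal.ofReal_zero]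
            exact zero_le
  calc ∑' k : ℕ, ENNReal.ofReal (variance (fun ω =>
        if |Y ω / ((m + k : ℕ) : ℝ) ^ (1/q)| ≤ 1 then
          Y ω / ((m + k : ℕ) : ℝ) ^ (1/q) else 0) P)
      ≤ ∑' k : ℕ, ∫⁻ ω, (if |Y ω| ^ q ≤ ((m + k : ℕ) : ℝ) then
          ENNReal.ofReal (((m + k : ℕ) : ℝ) ^ (-(2/q)) * |Y ω| ^ 2) else 0) ∂P :=
        ENNReal.tsum_le_tsum fun k => hterm (m + k) (by omega)
    _ = ∫⁻ ω, ∑' k : ℕ, (if |Y ω| ^ q ≤ ((m + k : ℕ) : ℝ) then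
          ENNReal.ofReal (((m + k : ℕ) : ℝ) ^ (-(2/q)) * |Y ω| ^ 2) else 0) ∂P := by
        rw [← MeasureTheory.lintegral_tsum]
        intro k
        apply Measurable.aemeasurable
        apply Measurable.ite (measurableSet_le (Wmeas hY) measurable_const) _ measurable_const
        exact ((hY.abs.pow_const 2).const_mul _).ennreal_ofReal
    _ ≤ ∫⁻ ω, ENNReal.ofReal ((1 + q/(2-q)) *
          (max (m : ℝ) (|Y ω| ^ q)) ^ ((q-2)/q) * |Y ω| ^ 2) ∂P := by
        apply MeasureTheory.lintegral_mono
        intro ω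
        exact P2 hq1 hq2 (abs_nonneg (Y ω)) m hm
private lemma aux2b {Ω : Type*} [MeasurableSpace Ω] (P : Measure Ω) [IsProbabilityMeasure P]
    {Y : Ω → ℝ} (hY : Measurable Y)
    {q : ℝ} (hq1 : 1 < q) (hq2 : q < 2) (M₀ m : ℕ) (hM₀ : 1 ≤ M₀) (hMm : M₀ ≤ m) :
    ∫⁻ ω, ENNReal.ofReal ((1 + q/(2-q)) *
        (max (m : ℝ) (|Y ω| ^ q)) ^ ((q-2)/q) * |Y ω| ^ 2) ∂P
      ≤ ENNReal.ofReal (1 + q/(2-q)) *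
        ((∫⁻ ω in {ω | (M₀ : ℝ) < |Y ω| ^ q}, ENNReal.ofReal (|Y ω| ^ q) ∂P)
          + ENNReal.ofReal (((M₀ : ℝ) ^ (2/q)) * ((m : ℝ) ^ ((q-2)/q)))) := by
  have hq0 : (0:ℝ) < q := by linarith
  have hC0 : (0:ℝ) ≤ 1 + q/(2-q) := by
    have : (0:ℝ) < q/(2-q) := div_pos hq0 (by linarith)
    linarith
  have hm1 : (1:ℝ) ≤ (m:ℝ) := by exact_mod_cast le_trans hM₀ hMm
  have hM₀1 : (1:ℝ) ≤ (M₀:ℝ) := by exact_mod_cast hM₀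
  have hMmR : (M₀:ℝ) ≤ (m:ℝ) := by exact_mod_cast hMm
  have hsq : ∀ ω, |Y ω| ^ 2 = (|Y ω| ^ q) ^ (2/q) := by
    intro ω
    rw [← Real.rpow_natCast (|Y ω|) 2, ← Real.rpow_mul (abs_nonneg _)]
    congr 1
    push_cast
    field_simp
  have hpoint : ∀ ω, ENNReal.ofReal ((1 + q/(2-q)) *
      (max (m : ℝ) (|Y ω| ^ q)) ^ ((q-2)/q) * |Y ω| ^ 2)
      ≤ ENNReal.ofReal (1 + q/(2-q)) *
        (Set.indicator {ω | (M₀ : ℝ) < |Y ω| ^ q} (fun ω => ENNReal.ofReal (|Y ω| ^ q)) ω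
          + ENNReal.ofReal (((M₀ : ℝ) ^ (2/q)) * ((m : ℝ) ^ ((q-2)/q)))) := by
    intro ω
    set W := |Y ω| ^ q with hW
    have hW0 : 0 ≤ W := Real.rpow_nonneg (abs_nonneg _) _
    rw [mul_assoc, ENNReal.ofReal_mul hC0]
    apply mul_le_mul_right _ _
    rw [Set.indicator_apply]
    by_cases hcase : (M₀ : ℝ) < W
    · rw [if_pos (show ω ∈ {ω | (M₀:ℝ) < |Y ω| ^ q} from hcase)]
      have hWpos : 0 < W := lt_of_lt_of_le (by linarith) hcase.le
      have hkey : (max (m : ℝ) W) ^ ((q-2)/q) * |Y ω| ^ 2 ≤ W := by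
        have hqsum : (q-2)/q + 2/q = 1 := by
          rw [← add_div, show q - 2 + 2 = q by ring]
          exact div_self hq0.ne'
        rw [hsq ω, ← hW]
        by_cases hmW : (m : ℝ) < W
        · rw [max_eq_right hmW.le, ← Real.rpow_add hWpos, hqsum, Real.rpow_one]
        · push_neg at hmW
          rw [max_eq_left hmW]
          calc (m:ℝ) ^ ((q-2)/q) * W ^ (2/q) ≤ W ^ ((q-2)/q) * W ^ (2/q) := by
                apply mul_le_mul_of_nonneg_right _ (Real.rpow_nonneg hW0 _)
                exact Real.rpow_le_rpow_of_nonpos hWpos hmW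
                  (div_nonpos_of_nonpos_of_nonneg (by linarith) hq0.le)
            _ = W := by
                rw [← Real.rpow_add hWpos, hqsum, Real.rpow_one]
      calc ENNReal.ofReal ((max (m : ℝ) W) ^ ((q-2)/q) * |Y ω| ^ 2)
          ≤ ENNReal.ofReal W := ENNReal.ofReal_le_ofReal hkey
        _ ≤ ENNReal.ofReal W + _ := le_self_add
    · push_neg at hcase
      rw [if_neg (show ω ∉ {ω | (M₀:ℝ) < |Y ω| ^ q} by
        rw [Set.mem_setOf_eq, ← hW]; exact not_lt.mpr hcase), zero_add]
      apply ENNReal.ofReal_le_ofReal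
      have hmax : max (m : ℝ) W = (m : ℝ) := max_eq_left (le_trans hcase hMmR)
      rw [hmax, hsq ω, ← hW]
      calc (m:ℝ) ^ ((q-2)/q) * W ^ (2/q) ≤ (m:ℝ) ^ ((q-2)/q) * (M₀:ℝ) ^ (2/q) := by
            apply mul_le_mul_of_nonneg_left _ (Real.rpow_nonneg (by linarith) _)
            exact Real.rpow_le_rpow hW0 hcase (by positivity)
        _ = (M₀:ℝ) ^ (2/q) * (m:ℝ) ^ ((q-2)/q) := mul_comm _ _
  calc ∫⁻ ω, ENNReal.ofReal ((1 + q/(2-q)) *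
        (max (m : ℝ) (|Y ω| ^ q)) ^ ((q-2)/q) * |Y ω| ^ 2) ∂P
      ≤ ∫⁻ ω, ENNReal.ofReal (1 + q/(2-q)) *
          (Set.indicator {ω | (M₀ : ℝ) < |Y ω| ^ q} (fun ω => ENNReal.ofReal (|Y ω| ^ q)) ω
            + ENNReal.ofReal (((M₀ : ℝ) ^ (2/q)) * ((m : ℝ) ^ ((q-2)/q)))) ∂P :=
        MeasureTheory.lintegral_mono hpoint
    _ = ENNReal.ofReal (1 + q/(2-q)) *
          ((∫⁻ ω in {ω | (M₀ : ℝ) < |Y ω| ^ q}, ENNReal.ofReal (|Y ω| ^ q) ∂P)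
            + ENNReal.ofReal (((M₀ : ℝ) ^ (2/q)) * ((m : ℝ) ^ ((q-2)/q)))) := by
        rw [MeasureTheory.lintegral_const_mul _
          (by exact (Measurable.add
            (((Wmeas hY).ennreal_ofReal).indicator
              (measurableSet_lt measurable_const (Wmeas hY)))
            measurable_const))]
        congr 1
        rw [MeasureTheory.lintegral_add_right _ measurable_const,
          MeasureTheory.lintegral_indicator
            (measurableSet_lt measurable_const (Wmeas hY)),
          MeasureTheory.lintegral_const, measure_univ, mul_one]

/-- Sufficient conditions for the Ps-uniform Kolmogorov three-series theorem with `c = 1` in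
the i.i.d. case with `1 < q < 2`: Ps-uniform integrability of the centered q-th moment implies
the three series for `Z_n := (X_n − E_P X)/n^{1/q}` have Ps-uniformly vanishing tails. -/
theorem stmt17 {Ω : Type*} [MeasurableSpace Ω] (Ps : Set (Measure Ω))
    (hPs : ∀ P ∈ Ps, IsProbabilityMeasure P)
    (X : ℕ → Ω → ℝ) (hmeas : ∀ n, Measurable (X n))
    (hindep : ∀ P ∈ Ps, iIndepFun X P)
    (hiid : ∀ P ∈ Ps, ∀ n, IdentDistrib (X n) (X 0) P P)
    (q : ℝ) (hq1 : 1 < q) (hq2 : q < 2)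
    (hint : ∀ P ∈ Ps, Integrable (X 0) P)
    (hmom : ∀ P ∈ Ps, Integrable (fun ω => |X 0 ω - ∫ x, X 0 x ∂P| ^ q) P)
    (hUI : ∀ ε : ℝ, 0 < ε → ∃ M : ℕ, ∀ m ≥ M, ∀ P ∈ Ps,
      ∫ ω in {ω | (m : ℝ) < |X 0 ω - ∫ x, X 0 x ∂P| ^ q},
        |X 0 ω - ∫ x, X 0 x ∂P| ^ q ∂P < ε) :
    (∀ ε : ℝ, 0 < ε → ∃ M : ℕ, ∀ m ≥ M, ∀ P ∈ Ps,
      ∑' k : ℕ, ENNReal.ofReal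
        |∫ ω, (if |(X (m + k) ω - ∫ x, X 0 x ∂P) / ((m + k : ℕ) : ℝ) ^ (1 / q)| ≤ 1 then
            (X (m + k) ω - ∫ x, X 0 x ∂P) / ((m + k : ℕ) : ℝ) ^ (1 / q) else 0) ∂P| <
        ENNReal.ofReal ε) ∧
    (∀ ε : ℝ, 0 < ε → ∃ M : ℕ, ∀ m ≥ M, ∀ P ∈ Ps,
      ∑' k : ℕ, ENNReal.ofReal
        (variance (fun ω =>
          if |(X (m + k) ω - ∫ x, X 0 x ∂P) / ((m + k : ℕ) : ℝ) ^ (1 / q)| ≤ 1 then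
            (X (m + k) ω - ∫ x, X 0 x ∂P) / ((m + k : ℕ) : ℝ) ^ (1 / q) else 0) P) <
        ENNReal.ofReal ε) ∧
    (∀ ε : ℝ, 0 < ε → ∃ M : ℕ, ∀ m ≥ M, ∀ P ∈ Ps,
      ∑' k : ℕ,
        P {ω | ((m + k : ℕ) : ℝ) ^ (1 / q) < |X (m + k) ω - ∫ x, X 0 x ∂P|} <
        ENNReal.ofReal ε) := by
  
  have hq0 : (0:ℝ) < q := lt_trans one_pos hq1
  refine ⟨?_, ?_, ?_⟩
  · -- series 1 : means
    intro ε hε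
    have hCpos : (0:ℝ) < q / (q - 1) := div_pos hq0 (by linarith)
    set δ : ℝ := ε / (2 * (q / (q - 1))) with hδdef
    have hδpos : 0 < δ := by positivity
    obtain ⟨M₁, hM₁⟩ := hUI δ hδpos
    refine ⟨max M₁ 1, fun m hm P hP => ?_⟩
    haveI := hPs P hP
    set μP := ∫ x, X 0 x ∂P with hμP
    have hm1 : 1 ≤ m := le_trans (le_max_right M₁ 1) hm
    have hmM₁ : M₁ ≤ m := le_trans (le_max_left M₁ 1) hm
    have hYmeas : Measurable (fun ω => X 0 ω - μP) := (hmeas 0).sub measurable_const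
    have hYint : Integrable (fun ω => X 0 ω - μP) P := (hint P hP).sub (integrable_const μP)
    have hY0 : ∫ ω, (X 0 ω - μP) ∂P = 0 := by
      rw [integral_sub (hint P hP) (integrable_const μP), integral_const, probReal_univ]
      simp [hμP]
    have htrans : ∀ k : ℕ,
        (∫ ω, (if |(X (m + k) ω - μP) / ((m + k : ℕ) : ℝ) ^ (1 / q)| ≤ 1 then
            (X (m + k) ω - μP) / ((m + k : ℕ) : ℝ) ^ (1 / q) else 0) ∂P)
        = ∫ ω, (if |(X 0 ω - μP) / ((m + k : ℕ) : ℝ) ^ (1 / q)| ≤ 1 then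
            (X 0 ω - μP) / ((m + k : ℕ) : ℝ) ^ (1 / q) else 0) ∂P := by
      intro k
      have hg : Measurable (fun x : ℝ =>
          if |(x - μP) / ((m + k : ℕ) : ℝ) ^ (1 / q)| ≤ 1 then
            (x - μP) / ((m + k : ℕ) : ℝ) ^ (1 / q) else 0) := by
        apply Measurable.ite _ ((measurable_id.sub_const μP).div_const _) measurable_const
        exact measurableSet_le ((measurable_id.sub_const μP).div_const _).abs measurable_const
      exact ((hiid P hP (m + k)).comp hg).integral_eq
    have hlink : ∫⁻ ω in {ω | (m : ℝ) < |X 0 ω - μP| ^ q},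
        ENNReal.ofReal (|X 0 ω - μP| ^ q) ∂P
        = ENNReal.ofReal (∫ ω in {ω | (m : ℝ) < |X 0 ω - μP| ^ q}, |X 0 ω - μP| ^ q ∂P) :=
      (MeasureTheory.ofReal_integral_eq_lintegral_ofReal ((hmom P hP).restrict)
        (Filter.Eventually.of_forall fun ω => Real.rpow_nonneg (abs_nonneg _) q)).symm
    calc ∑' k : ℕ, ENNReal.ofReal
          |∫ ω, (if |(X (m + k) ω - μP) / ((m + k : ℕ) : ℝ) ^ (1 / q)| ≤ 1 then
              (X (m + k) ω - μP) / ((m + k : ℕ) : ℝ) ^ (1 / q) else 0) ∂P|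
        = ∑' k : ℕ, ENNReal.ofReal
          |∫ ω, (if |(X 0 ω - μP) / ((m + k : ℕ) : ℝ) ^ (1 / q)| ≤ 1 then
              (X 0 ω - μP) / ((m + k : ℕ) : ℝ) ^ (1 / q) else 0) ∂P| :=
          tsum_congr fun k => by rw [htrans k]
      _ ≤ ENNReal.ofReal (q / (q - 1)) *
            ∫⁻ ω in {ω | (m : ℝ) < |X 0 ω - μP| ^ q},
              ENNReal.ofReal (|X 0 ω - μP| ^ q) ∂P :=
          aux1 P hYmeas hYint hY0 hq1 m hm1
      _ ≤ ENNReal.ofReal (q / (q - 1)) * ENNReal.ofReal δ := by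
          rw [hlink]
          exact mul_le_mul_right (ENNReal.ofReal_le_ofReal (hM₁ m hmM₁ P hP).le) _
      _ = ENNReal.ofReal (ε / 2) := by
          rw [← ENNReal.ofReal_mul hCpos.le]
          congr 1
          have h1 : q - 1 ≠ 0 := ne_of_gt (by linarith)
          have h2 : q ≠ 0 := ne_of_gt hq0
          rw [hδdef]
          field_simp
          try ring
      _ < ENNReal.ofReal ε := (ENNReal.ofReal_lt_ofReal_iff hε).mpr (by linarith)
  · -- series 2 : variances
    intro ε hε
    have hC2pos : (0:ℝ) < 1 + q / (2 - q) := by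
      have : (0:ℝ) < q / (2 - q) := div_pos hq0 (by linarith)
      linarith
    set δ : ℝ := ε / (4 * (1 + q / (2 - q))) with hδdef
    have hδpos : 0 < δ := by positivity
    obtain ⟨M₁, hM₁⟩ := hUI δ hδpos
    set M₀ : ℕ := max M₁ 1 with hM₀def
    have hM₀1 : 1 ≤ M₀ := le_max_right _ _
    have htend : Filter.Tendsto
        (fun m : ℕ => ((M₀ : ℝ) ^ (2 / q)) * ((m : ℝ) ^ ((q - 2) / q)))
        Filter.atTop (nhds 0) := by
      have h1 : Filter.Tendsto (fun x : ℝ => x ^ ((q - 2) / q)) Filter.atTop (nhds 0) := by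
        have h0 := tendsto_rpow_neg_atTop (show (0:ℝ) < (2 - q) / q by
          apply div_pos (by linarith) hq0)
        apply h0.congr
        intro x
        congr 1
        ring
      have h2 := h1.comp (tendsto_natCast_atTop_atTop (R := ℝ))
      simpa using h2.const_mul ((M₀ : ℝ) ^ (2 / q))
    have hev := htend.eventually (eventually_le_nhds hδpos)
    rw [Filter.eventually_atTop] at hev
    obtain ⟨M₂, hM₂⟩ := hev
    refine ⟨max (max M₀ M₂) 1, fun m hm P hP => ?_⟩
    haveI := hPs P hP
    set μP := ∫ x, X 0 x ∂P with hμP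
    have hm1 : 1 ≤ m := le_trans (le_max_right _ 1) hm
    have hmM₀ : M₀ ≤ m := le_trans (le_trans (le_max_left M₀ M₂) (le_max_left _ 1)) hm
    have hmM₂ : M₂ ≤ m := le_trans (le_trans (le_max_right M₀ M₂) (le_max_left _ 1)) hm
    have hYmeas : Measurable (fun ω => X 0 ω - μP) := (hmeas 0).sub measurable_const
    have htrans : ∀ k : ℕ,
        variance (fun ω => if |(X (m + k) ω - μP) / ((m + k : ℕ) : ℝ) ^ (1 / q)| ≤ 1 then
            (X (m + k) ω - μP) / ((m + k : ℕ) : ℝ) ^ (1 / q) else 0) P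
        = variance (fun ω => if |(X 0 ω - μP) / ((m + k : ℕ) : ℝ) ^ (1 / q)| ≤ 1 then
            (X 0 ω - μP) / ((m + k : ℕ) : ℝ) ^ (1 / q) else 0) P := by
      intro k
      have hg : Measurable (fun x : ℝ =>
          if |(x - μP) / ((m + k : ℕ) : ℝ) ^ (1 / q)| ≤ 1 then
            (x - μP) / ((m + k : ℕ) : ℝ) ^ (1 / q) else 0) := by
        apply Measurable.ite _ ((measurable_id.sub_const μP).div_const _) measurable_const
        exact measurableSet_le ((measurable_id.sub_const μP).div_const _).abs measurable_const
      exact ((hiid P hP (m + k)).comp hg).variance_eq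
    have hlink : ∫⁻ ω in {ω | (M₀ : ℝ) < |X 0 ω - μP| ^ q},
        ENNReal.ofReal (|X 0 ω - μP| ^ q) ∂P
        = ENNReal.ofReal (∫ ω in {ω | (M₀ : ℝ) < |X 0 ω - μP| ^ q}, |X 0 ω - μP| ^ q ∂P) :=
      (MeasureTheory.ofReal_integral_eq_lintegral_ofReal ((hmom P hP).restrict)
        (Filter.Eventually.of_forall fun ω => Real.rpow_nonneg (abs_nonneg _) q)).symm
    calc ∑' k : ℕ, ENNReal.ofReal
          (variance (fun ω =>
            if |(X (m + k) ω - μP) / ((m + k : ℕ) : ℝ) ^ (1 / q)| ≤ 1 then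
              (X (m + k) ω - μP) / ((m + k : ℕ) : ℝ) ^ (1 / q) else 0) P)
        = ∑' k : ℕ, ENNReal.ofReal
          (variance (fun ω =>
            if |(X 0 ω - μP) / ((m + k : ℕ) : ℝ) ^ (1 / q)| ≤ 1 then
              (X 0 ω - μP) / ((m + k : ℕ) : ℝ) ^ (1 / q) else 0) P) :=
          tsum_congr fun k => by rw [htrans k]
      _ ≤ ∫⁻ ω, ENNReal.ofReal ((1 + q / (2 - q)) *
            (max (m : ℝ) (|X 0 ω - μP| ^ q)) ^ ((q - 2) / q) * |X 0 ω - μP| ^ 2) ∂P :=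
          aux2 P hYmeas hq1 hq2 m hm1
      _ ≤ ENNReal.ofReal (1 + q / (2 - q)) *
            ((∫⁻ ω in {ω | (M₀ : ℝ) < |X 0 ω - μP| ^ q},
              ENNReal.ofReal (|X 0 ω - μP| ^ q) ∂P)
              + ENNReal.ofReal (((M₀ : ℝ) ^ (2 / q)) * ((m : ℝ) ^ ((q - 2) / q)))) :=
          aux2b P hYmeas hq1 hq2 M₀ m hM₀1 hmM₀
      _ ≤ ENNReal.ofReal (1 + q / (2 - q)) * (ENNReal.ofReal δ + ENNReal.ofReal δ) := by
          apply mul_le_mul_right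
          apply add_le_add
          · rw [hlink]
            exact ENNReal.ofReal_le_ofReal (hM₁ M₀ (le_max_left _ _) P hP).le
          · exact ENNReal.ofReal_le_ofReal (hM₂ m hmM₂)
      _ = ENNReal.ofReal (ε / 2) := by
          rw [← ENNReal.ofReal_add hδpos.le hδpos.le, ← ENNReal.ofReal_mul hC2pos.le]
          congr 1
          have h1 : 1 + q / (2 - q) ≠ 0 := ne_of_gt hC2pos
          have h2 : (2:ℝ) - q ≠ 0 := ne_of_gt (by linarith)
          rw [hδdef]
          field_simp
          try ring
      _ < ENNReal.ofReal ε := (ENNReal.ofReal_lt_ofReal_iff hε).mpr (by linarith)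
  · -- series 3 : tails
    intro ε hε
    set δ : ℝ := ε / 2 with hδdef
    have hδpos : 0 < δ := by positivity
    obtain ⟨M₁, hM₁⟩ := hUI δ hδpos
    refine ⟨max M₁ 1, fun m hm P hP => ?_⟩
    haveI := hPs P hP
    set μP := ∫ x, X 0 x ∂P with hμP
    have hm1 : 1 ≤ m := le_trans (le_max_right M₁ 1) hm
    have hmM₁ : M₁ ≤ m := le_trans (le_max_left M₁ 1) hm
    have hYmeas : Measurable (fun ω => X 0 ω - μP) := (hmeas 0).sub measurable_const
    have htrans : ∀ k : ℕ,
        P {ω | ((m + k : ℕ) : ℝ) ^ (1 / q) < |X (m + k) ω - μP|}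
        = P {ω | ((m + k : ℕ) : ℝ) ^ (1 / q) < |X 0 ω - μP|} := by
      intro k
      have hs : MeasurableSet {x : ℝ | ((m + k : ℕ) : ℝ) ^ (1 / q) < |x - μP|} :=
        measurableSet_lt measurable_const (measurable_id.sub_const μP).abs
      exact (hiid P hP (m + k)).measure_mem_eq hs
    have hlink : ∫⁻ ω in {ω | (m : ℝ) < |X 0 ω - μP| ^ q},
        ENNReal.ofReal (|X 0 ω - μP| ^ q) ∂P
        = ENNReal.ofReal (∫ ω in {ω | (m : ℝ) < |X 0 ω - μP| ^ q}, |X 0 ω - μP| ^ q ∂P) :=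
      (MeasureTheory.ofReal_integral_eq_lintegral_ofReal ((hmom P hP).restrict)
        (Filter.Eventually.of_forall fun ω => Real.rpow_nonneg (abs_nonneg _) q)).symm
    calc ∑' k : ℕ, P {ω | ((m + k : ℕ) : ℝ) ^ (1 / q) < |X (m + k) ω - μP|}
        = ∑' k : ℕ, P {ω | ((m + k : ℕ) : ℝ) ^ (1 / q) < |X 0 ω - μP|} :=
          tsum_congr fun k => htrans k
      _ ≤ ∫⁻ ω in {ω | (m : ℝ) < |X 0 ω - μP| ^ q},
            ENNReal.ofReal (|X 0 ω - μP| ^ q) ∂P :=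
          aux3 P hYmeas hq1 m hm1
      _ ≤ ENNReal.ofReal δ := by
          rw [hlink]
          exact ENNReal.ofReal_le_ofReal (hM₁ m hmM₁ P hP).le
      _ < ENNReal.ofReal ε := (ENNReal.ofReal_lt_ofReal_iff hε).mpr (by linarith)
end
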